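/- arXiv:1507.04813 — 6 statements merged into one kernel-verified Lean document; each statement's English description precedes it below -/
import Mathlib

section
/- Let the compact set A and lower semicontinuous kernel K satisfy assumptions (A1)-(A4). For each N ≥ 2 choose a configuration ω_N ∈ A^N and let ν_N be the probability measure assigning mass 1/N to each point of ω_N (counting multiplicities). If the measures ν_N converge weakly to μ_eq as N → ∞, then lim_{N→∞} P(ω_N) = W_K. -/
open MeasureTheory Filter Topology BoundedContinuousFunction NNReal ENNReal

noncomputable section

/-- The potential of a measure `μ` with respect to the kernel `K x y = f (nndist x y)`. -/
def potential {t : ℕ} (f : ℝ≥0 → ℝ≥0∞) (μ : Measure (EuclideanSpace ℝ (Fin t)))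
    (x : EuclideanSpace ℝ (Fin t)) : ℝ≥0∞ :=
  ∫⁻ y, f (nndist x y) ∂μ

/-- The energy `I[μ] = ∫∫ K(x,y) dμ(x) dμ(y)`. -/
def energy {t : ℕ} (f : ℝ≥0 → ℝ≥0∞) (μ : Measure (EuclideanSpace ℝ (Fin t))) : ℝ≥0∞ :=
  ∫⁻ x, potential f μ x ∂μ

/-- The normalized discrete potential `(1/N) ∑_{y ∈ ω} K(x,y)` of a configuration. -/
def discretePotential {t : ℕ} (f : ℝ≥0 → ℝ≥0∞) {N : ℕ}
    (ω : Fin N → EuclideanSpace ℝ (Fin t)) (x : EuclideanSpace ℝ (Fin t)) : ℝ≥0∞ :=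
  (N : ℝ≥0∞)⁻¹ * ∑ i, f (nndist x (ω i))

/-- The polarization `P(ω) = min_{x ∈ A} (1/N) ∑_{y ∈ ω} K(x,y)` of a configuration. -/
def polarization {t : ℕ} (f : ℝ≥0 → ℝ≥0∞) (A : Set (EuclideanSpace ℝ (Fin t))) {N : ℕ}
    (ω : Fin N → EuclideanSpace ℝ (Fin t)) : ℝ≥0∞ :=
  ⨅ x ∈ A, discretePotential f ω x

/-- The optimal `N`-point polarization `𝒫(A,N)`. -/
def maxPolarization {t : ℕ} (f : ℝ≥0 → ℝ≥0∞) (A : Set (EuclideanSpace ℝ (Fin t)))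
    (N : ℕ) : ℝ≥0∞ :=
  ⨆ (ω : Fin N → EuclideanSpace ℝ (Fin t)) (_ : ∀ i, ω i ∈ A), polarization f A ω

/-- The normalized counting measure of a configuration. -/
def countingMeasure {t : ℕ} {N : ℕ} (ω : Fin N → EuclideanSpace ℝ (Fin t)) :
    Measure (EuclideanSpace ℝ (Fin t)) :=
  (N : ℝ≥0∞)⁻¹ • ∑ i, Measure.dirac (ω i)

/-- Weak convergence of a sequence of measures: integrals of every bounded continuous
function converge. -/
def WeaklyTendsto {t : ℕ} (ν : ℕ → Measure (EuclideanSpace ℝ (Fin t)))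
    (μ : Measure (EuclideanSpace ℝ (Fin t))) : Prop :=
  ∀ g : EuclideanSpace ℝ (Fin t) →ᵇ ℝ,
    Tendsto (fun N => ∫ x, g x ∂(ν N)) atTop (𝓝 (∫ x, g x ∂μ))


namespace PolarAux

/-- Moreau–Yosida style approximation of an `ℝ≥0∞`-valued function. -/
def G (f : ℝ≥0 → ℝ≥0∞) (K : ℕ) (r : ℝ≥0) : ℝ≥0∞ :=
  ⨅ s : ℝ≥0, min (f s) K + K * edist r s

variable {f : ℝ≥0 → ℝ≥0∞}

lemma G_le_self (K : ℕ) (r : ℝ≥0) : G f K r ≤ f r := by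
  refine le_trans (iInf_le _ r) ?_
  simp [min_le_left]

lemma G_le_nat (K : ℕ) (r : ℝ≥0) : G f K r ≤ K := by
  refine le_trans (iInf_le _ r) ?_
  simp [min_le_right]

lemma G_ne_top (K : ℕ) (r : ℝ≥0) : G f K r ≠ ⊤ :=
  ((G_le_nat K r).trans_lt (ENNReal.natCast_lt_top K)).ne

lemma G_mono {K K' : ℕ} (h : K ≤ K') (r : ℝ≥0) : G f K r ≤ G f K' r := by
  refine le_iInf fun s => le_trans (iInf_le _ s) ?_
  have h' : (K : ℝ≥0∞) ≤ (K' : ℝ≥0∞) := by exact_mod_cast h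
  exact add_le_add (min_le_min le_rfl h') (mul_le_mul_left h' _)

lemma G_lip (K : ℕ) (r r' : ℝ≥0) : G f K r ≤ G f K r' + K * edist r r' := by
  conv_rhs => rw [G, ENNReal.iInf_add]
  refine le_iInf fun s => le_trans (iInf_le (fun s => min (f s) K + K * edist r s) s) ?_
  have : (K : ℝ≥0∞) * edist r s ≤ K * edist r' s + K * edist r r' := by
    rw [← mul_add]
    exact mul_le_mul_right (le_trans (edist_triangle r r' s)
      (by rw [add_comm, edist_comm r r'] )) _
  calc min (f s) K + K * edist r s ≤ min (f s) K + (K * edist r' s + K * edist r r') :=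
        add_le_add_right this _
    _ = min (f s) K + K * edist r' s + K * edist r r' := by ring

lemma iSup_G (hf : LowerSemicontinuous f) (r : ℝ≥0) : ⨆ K, G f K r = f r := by
  refine le_antisymm (iSup_le fun K => G_le_self K r) ?_
  by_contra h
  push_neg at h
  obtain ⟨c, hc1, hc2⟩ := exists_between h
  have hct : c ≠ ⊤ := (hc2.trans_le le_top).ne
  have := hf r c hc2
  rw [Metric.eventually_nhds_iff] at this
  obtain ⟨δ, hδ, hball⟩ := this
  have hδ0 : ENNReal.ofReal δ ≠ 0 := by
    simpa using (ENNReal.ofReal_pos.2 hδ).ne'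
  obtain ⟨K1, hK1⟩ := ENNReal.exists_nat_gt hct
  obtain ⟨K2, hK2⟩ := ENNReal.exists_nat_gt (ENNReal.div_lt_top hct hδ0).ne
  set K := K1 + K2 with hK
  have hle : c ≤ G f K r := by
    refine le_iInf fun s => ?_
    by_cases hs : dist s r < δ
    · have h1 : c < f s := hball hs
      have h2 : c ≤ (K : ℝ≥0∞) := by
        calc c ≤ (K1 : ℝ≥0∞) := hK1.le
          _ ≤ (K : ℝ≥0∞) := by exact_mod_cast Nat.le_add_right _ _
      exact le_trans (le_min h1.le h2) le_self_add
    · have h1 : ENNReal.ofReal δ ≤ edist r s := by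
        rw [edist_comm]
        exact not_lt.1 fun hlt => hs (edist_lt_ofReal.1 hlt)
      have h2 : c ≤ (K : ℝ≥0∞) * ENNReal.ofReal δ := by
        have : c / ENNReal.ofReal δ ≤ (K : ℝ≥0∞) := by
          calc c / ENNReal.ofReal δ ≤ (K2 : ℝ≥0∞) := hK2.le
            _ ≤ (K : ℝ≥0∞) := by exact_mod_cast Nat.le_add_left _ _
        calc c = c / ENNReal.ofReal δ * ENNReal.ofReal δ :=
              (ENNReal.div_mul_cancel hδ0 ENNReal.ofReal_ne_top).symm
          _ ≤ (K : ℝ≥0∞) * ENNReal.ofReal δ := mul_le_mul_left this _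
      exact le_trans (h2.trans (mul_le_mul_right h1 _)) le_add_self
  exact absurd (hle.trans (le_iSup (fun K => G f K r) K)) (not_le.2 hc1)

lemma G_eq_ofReal_toReal (K : ℕ) (r : ℝ≥0) :
    G f K r = ENNReal.ofReal (G f K r).toReal :=
  (ENNReal.ofReal_toReal (G_ne_top K r)).symm

lemma continuous_G_toReal (f : ℝ≥0 → ℝ≥0∞) (K : ℕ) :
    Continuous fun r => (G f K r).toReal := by
  have : LipschitzWith K fun r => (G f K r).toReal := by
    refine LipschitzWith.of_dist_le_mul fun r r' => ?_
    have key : ∀ a b : ℝ≥0, (G f K a).toReal - (G f K b).toReal ≤ (K : ℝ) * dist a b := by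
      intro a b
      have h := G_lip (f := f) K a b
      have hKd : ((K : ℝ≥0∞) * edist a b).toReal = (K : ℝ) * dist a b := by
        rw [edist_dist, ENNReal.toReal_mul, ENNReal.toReal_ofReal dist_nonneg]
        simp
      have h2 : (G f K a).toReal ≤ ((G f K b) + (K : ℝ≥0∞) * edist a b).toReal :=
        ENNReal.toReal_mono (by
          refine ENNReal.add_ne_top.2 ⟨G_ne_top K b, ?_⟩
          rw [edist_dist]
          exact ENNReal.mul_ne_top (ENNReal.natCast_ne_top K) ENNReal.ofReal_ne_top) h
      rw [ENNReal.toReal_add (G_ne_top K b) (by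
        rw [edist_dist]
        exact ENNReal.mul_ne_top (ENNReal.natCast_ne_top K) ENNReal.ofReal_ne_top), hKd] at h2
      linarith
    rw [Real.dist_eq, abs_sub_le_iff]
    constructor
    · exact key r r'
    · rw [dist_comm]; exact key r' r
  exact this.continuous

lemma continuous_G (f : ℝ≥0 → ℝ≥0∞) (K : ℕ) : Continuous (G f K) := by
  have : G f K = fun r => ENNReal.ofReal (G f K r).toReal := by
    funext r; exact G_eq_ofReal_toReal K r
  rw [this]
  exact ENNReal.continuous_ofReal.comp (continuous_G_toReal f K)

lemma exists_pos_mul_le {k : ℕ} {e : ℝ≥0∞} (he : e ≠ 0) (he' : e ≠ ⊤) :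
    ∃ ρ : ℝ, 0 < ρ ∧ (k : ℝ≥0∞) * ENNReal.ofReal ρ ≤ e := by
  have hpos : 0 < e.toReal := ENNReal.toReal_pos he he'
  refine ⟨e.toReal / (k + 1 : ℕ), by positivity, ?_⟩
  have h1 : (k : ℝ≥0∞) ≤ ((k + 1 : ℕ) : ℝ≥0∞) := by exact_mod_cast Nat.le_succ k
  calc (k : ℝ≥0∞) * ENNReal.ofReal (e.toReal / (k + 1 : ℕ))
      ≤ ((k + 1 : ℕ) : ℝ≥0∞) * ENNReal.ofReal (e.toReal / (k + 1 : ℕ)) :=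
        mul_le_mul_left h1 _
    _ = ENNReal.ofReal ((k + 1 : ℕ) * (e.toReal / (k + 1 : ℕ))) := by
        rw [ENNReal.ofReal_mul (by positivity), ENNReal.ofReal_natCast]
    _ = ENNReal.ofReal e.toReal := by
        congr 1
        field_simp
    _ = e := ENNReal.ofReal_toReal he'

variable {t : ℕ}

lemma lint_counting {N : ℕ} (w : Fin N → EuclideanSpace ℝ (Fin t))
    {g : EuclideanSpace ℝ (Fin t) → ℝ≥0∞} (hg : Measurable g) :
    ∫⁻ y, g y ∂(countingMeasure w) = (N : ℝ≥0∞)⁻¹ * ∑ i, g (w i) := by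
  rw [countingMeasure, lintegral_smul_measure, lintegral_finset_sum_measure]
  simp [lintegral_dirac' _ hg]

lemma counting_univ {N : ℕ} (w : Fin N → EuclideanSpace ℝ (Fin t)) :
    countingMeasure w Set.univ ≤ 1 := by
  have h : countingMeasure w Set.univ = (N : ℝ≥0∞)⁻¹ * N := by
    rw [← lintegral_one, lint_counting w measurable_const]
    simp
  rw [h]
  rcases Nat.eq_zero_or_pos N with hN | hN
  · simp [hN]
  · rw [ENNReal.inv_mul_cancel (by exact_mod_cast hN.ne') (ENNReal.natCast_ne_top N)]

lemma pot_lip (f : ℝ≥0 → ℝ≥0∞) (K : ℕ) (m : Measure (EuclideanSpace ℝ (Fin t)))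
    (hm : m Set.univ ≤ 1) (x x' : EuclideanSpace ℝ (Fin t)) :
    ∫⁻ y, G f K (nndist x y) ∂m ≤ (∫⁻ y, G f K (nndist x' y) ∂m) + K * edist x x' := by
  have hpt : ∀ y, G f K (nndist x y) ≤ G f K (nndist x' y) + K * edist x x' := by
    intro y
    refine le_trans (G_lip K _ _) (add_le_add_right (mul_le_mul_right ?_ _) _)
    rw [edist_dist, edist_dist]
    refine ENNReal.ofReal_le_ofReal ?_
    have hd : dist (nndist x y) (nndist x' y) = dist (dist x y) (dist x' y) := by
      rw [NNReal.dist_eq, coe_nndist, coe_nndist, Real.dist_eq]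
    rw [hd]
    exact dist_dist_dist_le_left x x' y
  calc ∫⁻ y, G f K (nndist x y) ∂m
      ≤ ∫⁻ y, (G f K (nndist x' y) + K * edist x x') ∂m := lintegral_mono hpt
    _ = (∫⁻ y, G f K (nndist x' y) ∂m) + (K * edist x x') * m Set.univ := by
        rw [lintegral_add_right _ measurable_const, lintegral_const]
    _ ≤ (∫⁻ y, G f K (nndist x' y) ∂m) + K * edist x x' := by
        refine add_le_add_right ?_ _
        calc ((K : ℝ≥0∞) * edist x x') * m Set.univ ≤ ((K : ℝ≥0∞) * edist x x') * 1 :=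
              mul_le_mul_right hm _
          _ = (K : ℝ≥0∞) * edist x x' := mul_one _

end PolarAux

theorem weak_convergence_implies_polarization_limit
    {t : ℕ} (A : Set (EuclideanSpace ℝ (Fin t))) (hA : IsCompact A)
    (f : ℝ≥0 → ℝ≥0∞) (hf : LowerSemicontinuous f)
    (μeq : Measure (EuclideanSpace ℝ (Fin t))) (hμeq : IsProbabilityMeasure μeq)
    (hμeqA : μeq Aᶜ = 0)
    (hA1 : ∃ μ : Measure (EuclideanSpace ℝ (Fin t)),
      IsProbabilityMeasure μ ∧ μ Aᶜ = 0 ∧ energy f μ < ⊤)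
    (hA2min : ∀ ν : Measure (EuclideanSpace ℝ (Fin t)),
      IsProbabilityMeasure ν → ν Aᶜ = 0 → energy f μeq ≤ energy f ν)
    (hA2uniq : ∀ ν : Measure (EuclideanSpace ℝ (Fin t)),
      IsProbabilityMeasure ν → ν Aᶜ = 0 → energy f ν = energy f μeq → ν = μeq)
    (hA3 : ∀ x ∈ A, ∀ U : Set (EuclideanSpace ℝ (Fin t)), IsOpen U → x ∈ U → 0 < μeq U)
    (W : ℝ≥0∞) (hW : 0 < W) (hA4 : ∀ x ∈ A, potential f μeq x = W)
    (ω : (N : ℕ) → Fin N → EuclideanSpace ℝ (Fin t)) (hω : ∀ N, ∀ i, ω N i ∈ A)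
    (hconv : WeaklyTendsto (fun N => countingMeasure (ω N)) μeq) :
    Tendsto (fun N => polarization f A (ω N)) atTop (𝓝 W) := by
  classical
  have hmf : ∀ x : EuclideanSpace ℝ (Fin t), Measurable fun y => f (nndist x y) :=
    fun x => hf.measurable.comp (continuous_const.nndist continuous_id).measurable
  have hmf' : ∀ a : EuclideanSpace ℝ (Fin t), Measurable fun x => f (nndist x a) :=
    fun a => hf.measurable.comp (continuous_id.nndist continuous_const).measurable
  have haeA : ∀ᵐ x ∂μeq, x ∈ A := by
    rw [MeasureTheory.ae_iff]
    exact hμeqA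
  set ν : ℕ → Measure (EuclideanSpace ℝ (Fin t)) := fun N => countingMeasure (ω N) with hνdef
  have hν1 : ∀ N, ν N Set.univ ≤ 1 := fun N => PolarAux.counting_univ (ω N)
  have hdisc : ∀ (N : ℕ) x, discretePotential f (ω N) x = ∫⁻ y, f (nndist x y) ∂(ν N) :=
    fun N x => by rw [PolarAux.lint_counting (ω N) (hmf x)]; rfl
  -- upper bound
  have hub : ∀ N : ℕ, 1 ≤ N → polarization f A (ω N) ≤ W := by
    intro N hN
    have hNne : (N : ℝ≥0∞) ≠ 0 := by
      exact Nat.cast_ne_zero.2 (by omega)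
    have key : ∫⁻ x, discretePotential f (ω N) x ∂μeq = W := by
      unfold discretePotential
      rw [lintegral_const_mul _ (Finset.measurable_sum _ fun i _ => hmf' (ω N i)),
        lintegral_finset_sum _ fun i _ => hmf' (ω N i)]
      have hW' : ∀ i : Fin N, ∫⁻ x, f (nndist x (ω N i)) ∂μeq = W := by
        intro i
        have he : (fun x => f (nndist x (ω N i))) = fun x => f (nndist (ω N i) x) :=
          funext fun x => by rw [nndist_comm]
        rw [he]
        exact hA4 _ (hω N i)
      simp only [hW']
      rw [Finset.sum_const, Finset.card_univ, Fintype.card_fin, nsmul_eq_mul, ← mul_assoc,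
        ENNReal.inv_mul_cancel hNne (ENNReal.natCast_ne_top N), one_mul]
    calc polarization f A (ω N) = ∫⁻ _, polarization f A (ω N) ∂μeq := by
          rw [lintegral_const, measure_univ, mul_one]
      _ ≤ ∫⁻ x, discretePotential f (ω N) x ∂μeq := by
          refine lintegral_mono_ae (haeA.mono fun x hx => ?_)
          exact biInf_le _ hx
      _ = W := key
  rw [tendsto_order]
  constructor
  swap
  · intro b hb
    filter_upwards [eventually_ge_atTop 1] with N hN
    exact lt_of_le_of_lt (hub N hN) hb
  intro c hc
  obtain ⟨c₀, hcc₀, h₀⟩ := exists_between hc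
  obtain ⟨c₁, hc₀c₁, h₁⟩ := exists_between h₀
  obtain ⟨c₁', hc₁c₁', h₁'⟩ := exists_between h₁
  have hc₁'top : c₁' ≠ ⊤ := by
    intro he
    rw [he] at h₁'
    exact absurd h₁' (not_lt.2 le_top)
  have hc₁'topne : c₁' ≠ ⊤ := (h₁'.trans_le le_top).ne
  have hc₁topne : c₁ ≠ ⊤ := (hc₁c₁'.trans_le le_top).ne
  set u : ℕ → EuclideanSpace ℝ (Fin t) → ℝ≥0∞ :=
    fun K x => ∫⁻ y, PolarAux.G f K (nndist x y) ∂μeq with hudef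
  have hmg : ∀ (K : ℕ) (x : EuclideanSpace ℝ (Fin t)),
      Measurable fun y => PolarAux.G f K (nndist x y) := fun K x =>
    ((PolarAux.continuous_G f K).comp (continuous_const.nndist continuous_id)).measurable
  have hu_sup : ∀ x ∈ A, W ≤ ⨆ K, u K x := by
    intro x hx
    have mono : Monotone fun (K : ℕ) => fun y => PolarAux.G f K (nndist x y) :=
      fun K K' h y => PolarAux.G_mono h _
    have h1 : (⨆ K, u K x) = ∫⁻ y, ⨆ K, PolarAux.G f K (nndist x y) ∂μeq :=
      (lintegral_iSup (fun K => hmg K x) mono).symm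
    rw [h1, ← hA4 x hx, potential]
    refine le_of_eq ?_
    congr 1
    funext y
    exact (PolarAux.iSup_G hf _).symm
  have hu_mono : ∀ (k k' : ℕ), k ≤ k' → ∀ x, u k x ≤ u k' x :=
    fun k k' h x => lintegral_mono fun y => PolarAux.G_mono h _
  have hu_lip : ∀ (K : ℕ) x x', u K x ≤ u K x' + K * edist x x' :=
    fun K x x' => PolarAux.pot_lip f K μeq (le_of_eq measure_univ) x x'
  -- choose k pointwise, then radii
  have hxk : ∀ x : EuclideanSpace ℝ (Fin t), ∃ k : ℕ, x ∈ A → c₁' < u k x := by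
    intro x
    by_cases hx : x ∈ A
    · have : c₁' < ⨆ K, u K x := lt_of_lt_of_le h₁' (hu_sup x hx)
      obtain ⟨k, hk⟩ := lt_iSup_iff.1 this
      exact ⟨k, fun _ => hk⟩
    · exact ⟨0, fun h => absurd h hx⟩
  choose k hk using hxk
  have hxρ : ∀ x : EuclideanSpace ℝ (Fin t),
      ∃ ρ : ℝ, 0 < ρ ∧ (k x : ℝ≥0∞) * ENNReal.ofReal ρ ≤ c₁' - c₁ := fun x =>
    PolarAux.exists_pos_mul_le (tsub_pos_of_lt hc₁c₁').ne'
      ((tsub_le_self.trans_lt (lt_top_iff_ne_top.2 hc₁'topne)).ne)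
  choose ρ hρpos hρle using hxρ
  obtain ⟨s, hsA, hcov⟩ := hA.elim_nhds_subcover (fun z => Metric.ball z (ρ z))
    (fun z _ => Metric.ball_mem_nhds z (hρpos z))
  set K := s.sup k with hKdef
  have hKA : ∀ x ∈ A, c₁ < u K x := by
    intro x hx
    obtain ⟨z, hz, hxz⟩ := Set.mem_iUnion₂.1 (hcov hx)
    by_contra hcon
    push_neg at hcon
    have h1 : u (k z) x ≤ c₁ := le_trans (hu_mono _ _ (Finset.le_sup hz) x) hcon
    have h3 : (k z : ℝ≥0∞) * edist z x ≤ c₁' - c₁ := by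
      refine le_trans (mul_le_mul_right ?_ _) (hρle z)
      rw [edist_comm]
      exact (edist_lt_ofReal.2 (Metric.mem_ball.1 hxz)).le
    have habs : c₁' < c₁' := by
      calc c₁' < u (k z) z := hk z (hsA z hz)
        _ ≤ u (k z) x + (k z : ℝ≥0∞) * edist z x := hu_lip (k z) z x
        _ ≤ c₁ + (c₁' - c₁) := add_le_add h1 h3
        _ = c₁' := add_tsub_cancel_of_le hc₁c₁'.le
    exact lt_irrefl _ habs
  -- δ-net
  obtain ⟨δ, hδpos, hδle⟩ := PolarAux.exists_pos_mul_le (k := K)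
    (tsub_pos_of_lt hc₀c₁).ne' ((tsub_le_self.trans_lt (lt_top_iff_ne_top.2 hc₁topne)).ne)
  obtain ⟨s', hs'A, hcov'⟩ := hA.elim_nhds_subcover (fun z => Metric.ball z δ)
    (fun z _ => Metric.ball_mem_nhds z hδpos)
  have hfinν : ∀ N, IsFiniteMeasure (ν N) :=
    fun N => ⟨lt_of_le_of_lt (hν1 N) ENNReal.one_lt_top⟩
  -- convergence of discrete G-potentials at each point
  have hvlim : ∀ z : EuclideanSpace ℝ (Fin t),
      Tendsto (fun N => ∫⁻ y, PolarAux.G f K (nndist z y) ∂(ν N)) atTop (𝓝 (u K z)) := by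
    intro z
    have hcont : Continuous fun y : EuclideanSpace ℝ (Fin t) =>
        (PolarAux.G f K (nndist z y)).toReal :=
      (PolarAux.continuous_G_toReal f K).comp (continuous_const.nndist continuous_id)
    have hbd : ∀ y : EuclideanSpace ℝ (Fin t),
        ‖(PolarAux.G f K (nndist z y)).toReal‖ ≤ (K : ℝ) := by
      intro y
      rw [Real.norm_eq_abs, abs_of_nonneg ENNReal.toReal_nonneg]
      have := ENNReal.toReal_mono (ENNReal.natCast_ne_top K) (PolarAux.G_le_nat (f := f) K (nndist z y))
      simpa using this
    set H : EuclideanSpace ℝ (Fin t) →ᵇ ℝ :=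
      BoundedContinuousFunction.ofNormedAddCommGroup _ hcont (K : ℝ) hbd with hHdef
    have key : ∀ (m : Measure (EuclideanSpace ℝ (Fin t))) [IsFiniteMeasure m],
        ∫⁻ y, PolarAux.G f K (nndist z y) ∂m = ENNReal.ofReal (∫ y, H y ∂m) := by
      intro m _
      have hHy : ∀ y, H y = ((PolarAux.G f K (nndist z y)).toNNReal : ℝ) := fun y => rfl
      have hint : Integrable (fun y => ((PolarAux.G f K (nndist z y)).toNNReal : ℝ)) m := by
        have := H.integrable m
        exact this.congr (ae_of_all _ hHy)
      rw [show (fun y => PolarAux.G f K (nndist z y)) =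
          fun y => (((PolarAux.G f K (nndist z y)).toNNReal : ℝ≥0) : ℝ≥0∞) from
        funext fun y => (ENNReal.coe_toNNReal (PolarAux.G_ne_top _ _)).symm]
      rw [MeasureTheory.lintegral_coe_eq_integral _ hint]
      congr 1
    have h2 : Tendsto (fun N => ENNReal.ofReal (∫ y, H y ∂(ν N))) atTop
        (𝓝 (ENNReal.ofReal (∫ y, H y ∂μeq))) :=
      (ENNReal.continuous_ofReal.tendsto _).comp (hconv H)
    have e1 : (fun N => ∫⁻ y, PolarAux.G f K (nndist z y) ∂(ν N)) =
        fun N => ENNReal.ofReal (∫ y, H y ∂(ν N)) := by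
      funext N
      haveI := hfinν N
      exact key (ν N)
    have e2 : u K z = ENNReal.ofReal (∫ y, H y ∂μeq) := key μeq
    rw [e1, e2]
    exact h2
  have hev : ∀ᶠ N in atTop, ∀ z ∈ s',
      c₀ + (K : ℝ≥0∞) * ENNReal.ofReal δ < ∫⁻ y, PolarAux.G f K (nndist z y) ∂(ν N) := by
    rw [eventually_all_finset]
    intro z hz
    refine (hvlim z).eventually (lt_mem_nhds ?_)
    calc c₀ + (K : ℝ≥0∞) * ENNReal.ofReal δ ≤ c₀ + (c₁ - c₀) := add_le_add_right hδle _
      _ = c₁ := add_tsub_cancel_of_le hc₀c₁.le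
      _ < u K z := hKA z (hs'A z hz)
  filter_upwards [hev] with N hN
  refine lt_of_lt_of_le hcc₀ (le_iInf fun x => le_iInf fun hx => ?_)
  obtain ⟨z, hz, hxz⟩ := Set.mem_iUnion₂.1 (hcov' hx)
  have h2 : ∫⁻ y, PolarAux.G f K (nndist z y) ∂(ν N) ≤
      (∫⁻ y, PolarAux.G f K (nndist x y) ∂(ν N)) + (K : ℝ≥0∞) * ENNReal.ofReal δ := by
    refine le_trans (PolarAux.pot_lip f K (ν N) (hν1 N) z x)
      (add_le_add_right (mul_le_mul_right ?_ _) _)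
    rw [edist_comm]
    exact (edist_lt_ofReal.2 (Metric.mem_ball.1 hxz)).le
  have h3 : c₀ + (K : ℝ≥0∞) * ENNReal.ofReal δ <
      (∫⁻ y, PolarAux.G f K (nndist x y) ∂(ν N)) + (K : ℝ≥0∞) * ENNReal.ofReal δ :=
    lt_of_lt_of_le (hN z hz) h2
  have h4 : c₀ < ∫⁻ y, PolarAux.G f K (nndist x y) ∂(ν N) :=
    (ENNReal.add_lt_add_iff_right
      (ENNReal.mul_ne_top (ENNReal.natCast_ne_top K) ENNReal.ofReal_ne_top)).1 h3
  have h5 : ∫⁻ y, PolarAux.G f K (nndist x y) ∂(ν N) ≤ discretePotential f (ω N) x := by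
    rw [hdisc N x]
    exact lintegral_mono fun y => PolarAux.G_le_self K _
  exact (h4.trans_le h5).le
end
end

section
/- Let the compact set A and lower semicontinuous kernel K satisfy assumptions (A1), (A2), and (A4) (assumption (A3) is not needed). For each N ≥ 2 choose a configuration ω_N ∈ A^N. If lim_{N→∞} P(ω_N) = W_K, then ∫_A | (1/N)·Σ_{y∈ω_N} K(x,y) − P(ω_N) | dμ_eq(x) → 0 as N → ∞; that is, the functions x ↦ (1/N)·Σ_{y∈ω_N} K(x,y) − P(ω_N) converge to 0 in L¹(μ_eq). -/
open MeasureTheory Filter Topology BoundedContinuousFunction NNReal ENNReal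

noncomputable section

theorem polarization_limit_implies_L1_convergence
    {t : ℕ} (A : Set (EuclideanSpace ℝ (Fin t))) (hA : IsCompact A)
    (f : ℝ≥0 → ℝ≥0∞) (hf : LowerSemicontinuous f)
    (μeq : Measure (EuclideanSpace ℝ (Fin t))) (hμeq : IsProbabilityMeasure μeq)
    (hμeqA : μeq Aᶜ = 0)
    (hA1 : ∃ μ : Measure (EuclideanSpace ℝ (Fin t)),
      IsProbabilityMeasure μ ∧ μ Aᶜ = 0 ∧ energy f μ < ⊤)
    (hA2min : ∀ ν : Measure (EuclideanSpace ℝ (Fin t)),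
      IsProbabilityMeasure ν → ν Aᶜ = 0 → energy f μeq ≤ energy f ν)
    (hA2uniq : ∀ ν : Measure (EuclideanSpace ℝ (Fin t)),
      IsProbabilityMeasure ν → ν Aᶜ = 0 → energy f ν = energy f μeq → ν = μeq)
    (W : ℝ≥0∞) (hW : 0 < W) (hA4 : ∀ x ∈ A, potential f μeq x = W)
    (ω : (N : ℕ) → Fin N → EuclideanSpace ℝ (Fin t)) (hω : ∀ N, ∀ i, ω N i ∈ A)
    (hpol : Tendsto (fun N => polarization f A (ω N)) atTop (𝓝 W)) :
    Tendsto (fun N => ∫⁻ x, (discretePotential f (ω N) x - polarization f A (ω N)) ∂μeq)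
      atTop (𝓝 0) := by
  -- a.e. membership in A
  have haeA : ∀ᵐ x ∂μeq, x ∈ A := by
    rw [MeasureTheory.ae_iff]
    exact hμeqA
  -- measurability of the kernel slices
  have hmeas : ∀ a : EuclideanSpace ℝ (Fin t),
      Measurable (fun x : EuclideanSpace ℝ (Fin t) => f (nndist x a)) := by
    intro a
    exact hf.measurable.comp (Continuous.nndist continuous_id continuous_const).measurable
  -- W is finite
  have hWne : W ≠ ⊤ := by
    obtain ⟨μ, hμ, hμA, hμE⟩ := hA1
    have hE : energy f μeq = W := by
      have : ∀ᵐ x ∂μeq, potential f μeq x = W := haeA.mono fun x hx => hA4 x hx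
      rw [energy, lintegral_congr_ae this, lintegral_const, measure_univ, mul_one]
    have := lt_of_le_of_lt (hA2min μ hμ hμA) hμE
    rw [hE] at this
    exact this.ne
  -- integral of the discrete potential is W, for N ≥ 1
  have hint : ∀ N : ℕ, 1 ≤ N → ∫⁻ x, discretePotential f (ω N) x ∂μeq = W := by
    intro N hN
    have hNne : (N : ℝ≥0∞) ≠ 0 := Nat.cast_ne_zero.2 (by omega)
    have h1 : ∫⁻ x, discretePotential f (ω N) x ∂μeq
        = (N : ℝ≥0∞)⁻¹ * ∫⁻ x, ∑ i, f (nndist x (ω N i)) ∂μeq := by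
      simp only [discretePotential]
      exact lintegral_const_mul' _ _ (by simp [hNne])
    rw [h1, lintegral_finset_sum _ (fun i _ => hmeas (ω N i))]
    have h2 : ∀ i : Fin N, ∫⁻ x, f (nndist x (ω N i)) ∂μeq = W := by
      intro i
      have : (fun x => f (nndist x (ω N i))) = fun x => f (nndist (ω N i) x) := by
        funext x; rw [nndist_comm]
      rw [this]
      exact hA4 _ (hω N i)
    simp only [h2, Finset.sum_const, Finset.card_univ, Fintype.card_fin, nsmul_eq_mul]
    rw [← mul_assoc, ENNReal.inv_mul_cancel hNne (by simp), one_mul]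
  -- eventually the integrand's integral equals W - polarization
  have hev : ∀ᶠ N in atTop,
      ∫⁻ x, (discretePotential f (ω N) x - polarization f A (ω N)) ∂μeq
        = W - polarization f A (ω N) := by
    have hfin : ∀ᶠ N in atTop, polarization f A (ω N) < W + 1 :=
      hpol.eventually_lt_const (ENNReal.lt_add_right hWne one_ne_zero)
    filter_upwards [hfin, eventually_ge_atTop 1] with N hPfin hN1
    have hPne : polarization f A (ω N) ≠ ⊤ :=
      (hPfin.trans_le le_top).ne
    have hge : ∀ᵐ x ∂μeq, polarization f A (ω N) ≤ discretePotential f (ω N) x :=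
      haeA.mono fun x hx => biInf_le _ hx
    have hsub : ∫⁻ x, (discretePotential f (ω N) x - polarization f A (ω N)) ∂μeq
        = (∫⁻ x, discretePotential f (ω N) x ∂μeq) - ∫⁻ _, polarization f A (ω N) ∂μeq := by
      refine lintegral_sub measurable_const ?_ hge
      rw [lintegral_const, measure_univ, mul_one]; exact hPne
    rw [hsub, lintegral_const, measure_univ, mul_one, hint N hN1]
  refine Tendsto.congr' (EventuallyEq.symm hev) ?_
  have : Tendsto (fun N => W - polarization f A (ω N)) atTop (𝓝 (W - W)) :=
    ENNReal.Tendsto.sub tendsto_const_nhds hpol (Or.inl hWne)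
  simpa using this
end
end

section
/- Let the compact set A and lower semicontinuous kernel K satisfy assumptions (A1)-(A4). For each N ≥ 2 choose a configuration ω_N ∈ A^N. If the functions x ↦ (1/N)·Σ_{y∈ω_N} K(x,y) − P(ω_N) converge to 0 in L¹(μ_eq) as N → ∞, then lim_{N→∞} P(ω_N) = W_K. -/
open MeasureTheory Filter Topology BoundedContinuousFunction NNReal ENNReal

noncomputable section

theorem L1_convergence_implies_polarization_limit
    {t : ℕ} (A : Set (EuclideanSpace ℝ (Fin t))) (hA : IsCompact A)
    (f : ℝ≥0 → ℝ≥0∞) (hf : LowerSemicontinuous f)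
    (μeq : Measure (EuclideanSpace ℝ (Fin t))) (hμeq : IsProbabilityMeasure μeq)
    (hμeqA : μeq Aᶜ = 0)
    (hA1 : ∃ μ : Measure (EuclideanSpace ℝ (Fin t)),
      IsProbabilityMeasure μ ∧ μ Aᶜ = 0 ∧ energy f μ < ⊤)
    (hA2min : ∀ ν : Measure (EuclideanSpace ℝ (Fin t)),
      IsProbabilityMeasure ν → ν Aᶜ = 0 → energy f μeq ≤ energy f ν)
    (hA2uniq : ∀ ν : Measure (EuclideanSpace ℝ (Fin t)),
      IsProbabilityMeasure ν → ν Aᶜ = 0 → energy f ν = energy f μeq → ν = μeq)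
    (hA3 : ∀ x ∈ A, ∀ U : Set (EuclideanSpace ℝ (Fin t)), IsOpen U → x ∈ U → 0 < μeq U)
    (W : ℝ≥0∞) (hW : 0 < W) (hA4 : ∀ x ∈ A, potential f μeq x = W)
    (ω : (N : ℕ) → Fin N → EuclideanSpace ℝ (Fin t)) (hω : ∀ N, ∀ i, ω N i ∈ A)
    (hL1 : Tendsto (fun N => ∫⁻ x, (discretePotential f (ω N) x - polarization f A (ω N)) ∂μeq)
      atTop (𝓝 0)) :
    Tendsto (fun N => polarization f A (ω N)) atTop (𝓝 W) := by
  have hfm : Measurable f := hf.measurable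
  have hker : ∀ y, Measurable (fun x : EuclideanSpace ℝ (Fin t) => f (nndist x y)) := by
    intro y
    exact hfm.comp (continuous_id.nndist continuous_const).measurable
  have hdpm : ∀ N, Measurable (discretePotential f (ω N)) := by
    intro N
    unfold discretePotential
    exact (Finset.measurable_sum _ (fun i _ => hker (ω N i))).const_mul _
  have hAae : ∀ᵐ x ∂μeq, x ∈ A := by
    rw [MeasureTheory.ae_iff]
    exact hμeqA
  -- the integral of the discrete potential equals W for N ≥ 1
  have hint : ∀ N ≥ 1, ∫⁻ x, discretePotential f (ω N) x ∂μeq = W := by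
    intro N hN
    have hN0 : (N : ℝ≥0∞) ≠ 0 := by
      exact_mod_cast Nat.one_le_iff_ne_zero.mp hN
    unfold discretePotential
    rw [lintegral_const_mul' _ _ (ENNReal.inv_ne_top.2 hN0)]
    rw [lintegral_finset_sum _ (fun i _ => hker (ω N i))]
    have : ∀ i : Fin N, ∫⁻ x, f (nndist x (ω N i)) ∂μeq = W := by
      intro i
      have := hA4 (ω N i) (hω N i)
      unfold potential at this
      simpa [nndist_comm] using this
    simp only [this, Finset.sum_const, Finset.card_univ, Fintype.card_fin, nsmul_eq_mul]
    rw [← mul_assoc, ENNReal.inv_mul_cancel hN0 (by simp), one_mul]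
  -- the polarization is ≤ the discrete potential μeq-a.e.
  have hPle : ∀ N, ∀ᵐ x ∂μeq, polarization f A (ω N) ≤ discretePotential f (ω N) x := by
    intro N
    filter_upwards [hAae] with x hx
    exact biInf_le _ hx
  -- P ≤ W for N ≥ 1
  have hPW : ∀ N ≥ 1, polarization f A (ω N) ≤ W := by
    intro N hN
    calc polarization f A (ω N)
        = ∫⁻ _, polarization f A (ω N) ∂μeq := by
          simp [lintegral_const, hμeq.measure_univ]
      _ ≤ ∫⁻ x, discretePotential f (ω N) x ∂μeq := lintegral_mono_ae (hPle N)
      _ = W := hint N hN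
  -- W ≤ P + εN for N ≥ 1
  set ε : ℕ → ℝ≥0∞ :=
    fun N => ∫⁻ x, (discretePotential f (ω N) x - polarization f A (ω N)) ∂μeq with hε
  have hWP : ∀ N ≥ 1, W ≤ polarization f A (ω N) + ε N := by
    intro N hN
    calc W = ∫⁻ x, discretePotential f (ω N) x ∂μeq := (hint N hN).symm
      _ ≤ ∫⁻ x, ((discretePotential f (ω N) x - polarization f A (ω N))
            + polarization f A (ω N)) ∂μeq := lintegral_mono fun x => le_tsub_add
      _ = ε N + polarization f A (ω N) := by
          rw [lintegral_add_right' _ aemeasurable_const]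
          simp [hε, lintegral_const, hμeq.measure_univ]
      _ = polarization f A (ω N) + ε N := add_comm _ _
  -- conclude
  by_cases hWtop : W = ⊤
  · have : ∀ᶠ N in atTop, polarization f A (ω N) = W := by
      have h1 : ∀ᶠ N in atTop, ε N < 1 := hL1.eventually_lt_const (by norm_num)
      filter_upwards [h1, eventually_ge_atTop 1] with N hε1 hN1
      by_contra hne
      have hPlt : polarization f A (ω N) < ⊤ := lt_top_iff_ne_top.2 (hWtop ▸ hne)
      have := hWP N hN1
      rw [hWtop] at this
      exact absurd this (by simp [ENNReal.add_lt_top.2 ⟨hPlt, hε1.trans (by norm_num)⟩, lt_top_iff_ne_top.1])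
    exact Tendsto.congr' (Filter.EventuallyEq.symm this) tendsto_const_nhds
  · have hsub0 : Tendsto (fun N => W - polarization f A (ω N)) atTop (𝓝 0) := by
      have hle : ∀ᶠ N in atTop, W - polarization f A (ω N) ≤ ε N := by
        filter_upwards [eventually_ge_atTop 1] with N hN
        exact tsub_le_iff_right.2 (by rw [add_comm]; exact hWP N hN)
      exact tendsto_of_tendsto_of_tendsto_of_le_of_le' tendsto_const_nhds hL1
        (Eventually.of_forall fun _ => zero_le) hle
    have heq : ∀ᶠ N in atTop, polarization f A (ω N) = W - (W - polarization f A (ω N)) := by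
      filter_upwards [eventually_ge_atTop 1] with N hN
      exact (ENNReal.sub_sub_cancel hWtop (hPW N hN)).symm
    have hT : Tendsto (fun N => W - (W - polarization f A (ω N))) atTop (𝓝 (W - 0)) :=
      ENNReal.Tendsto.sub tendsto_const_nhds hsub0 (Or.inl hWtop)
    simpa using hT.congr' (heq.mono fun N h => h.symm)
end
end

section
/- Let the compact set A and lower semicontinuous kernel K satisfy assumptions (A1)-(A4). For each N ≥ 2 choose a configuration ω_N ∈ A^N and let ν_N be the probability measure assigning mass 1/N to each point of ω_N (counting multiplicities). If lim_{N→∞} P(ω_N) = W_K, then the measures ν_N converge weakly to μ_eq as N → ∞. -/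
open MeasureTheory Filter Topology BoundedContinuousFunction NNReal ENNReal

noncomputable section

section LSCApprox

variable {Y : Type*} [MetricSpace Y] [Nonempty Y]

/-- Inf-convolution approximation of a lower semicontinuous `ℝ≥0∞`-valued function by
continuous real-valued functions. -/
lemma exists_continuous_approx_of_lsc (g : Y → ℝ≥0∞) (hg : LowerSemicontinuous g) :
    ∃ h : ℕ → Y → ℝ,
      (∀ n, Continuous (h n)) ∧ (∀ n x, 0 ≤ h n x) ∧
      (∀ n x, ENNReal.ofReal (h n x) ≤ g x) ∧
      (∀ x, Monotone (fun n => h n x)) ∧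
      (∀ x, ⨆ n, ENNReal.ofReal (h n x) = g x) := by
  set h : ℕ → Y → ℝ := fun n x => ⨅ y : Y, ((min (g y) (n:ℝ≥0∞)).toReal + (n:ℝ) * dist x y) with hh
  have bdd : ∀ (n : ℕ) (x : Y), BddBelow (Set.range fun y : Y => ((min (g y) (n:ℝ≥0∞)).toReal + (n:ℝ) * dist x y)) := by
    intro n x
    refine ⟨0, ?_⟩
    rintro r ⟨y, rfl⟩
    positivity
  have hnonneg : ∀ n x, 0 ≤ h n x := by
    intro n x
    refine le_ciInf fun y => ?_
    positivity
  have hle : ∀ n x, h n x ≤ (min (g x) n).toReal := by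
    intro n x
    have := ciInf_le (bdd n x) x
    simpa using this
  have hofReal_le : ∀ n x, ENNReal.ofReal (h n x) ≤ g x := by
    intro n x
    calc ENNReal.ofReal (h n x) ≤ ENNReal.ofReal ((min (g x) n).toReal) :=
          ENNReal.ofReal_le_ofReal (hle n x)
      _ = min (g x) n := ENNReal.ofReal_toReal (ne_top_of_le_ne_top (by simp) (min_le_right _ _))
      _ ≤ g x := min_le_left _ _
  have hmono : ∀ x, Monotone fun n => h n x := by
    intro x
    refine monotone_nat_of_le_succ fun n => ?_
    refine ciInf_mono (bdd n x) fun y => ?_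
    have h1 : (min (g y) (n:ℝ≥0∞)).toReal ≤ (min (g y) ((n+1:ℕ):ℝ≥0∞)).toReal :=
      ENNReal.toReal_mono (ne_top_of_le_ne_top (by simp) (min_le_right _ _))
        (min_le_min le_rfl (by exact_mod_cast Nat.le_succ n))
    have h2 : ((n:ℝ)) * dist x y ≤ ((n+1:ℕ):ℝ) * dist x y := by
      have : ((n:ℝ)) ≤ ((n+1:ℕ):ℝ) := by exact_mod_cast Nat.le_succ n
      nlinarith [dist_nonneg (x := x) (y := y)]
    exact add_le_add h1 h2
  have hlip : ∀ n, Continuous (h n) := by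
    intro n
    have key : ∀ x x' : Y, h n x ≤ h n x' + n * dist x x' := by
      intro x x'
      have : h n x - n * dist x x' ≤ h n x' := by
        refine le_ciInf fun y => ?_
        have h1 : h n x ≤ (min (g y) n).toReal + n * dist x y := ciInf_le (bdd n x) y
        have h2 : dist x y ≤ dist x x' + dist x' y := dist_triangle x x' y
        have hn0 : (0:ℝ) ≤ n := Nat.cast_nonneg n
        nlinarith [mul_le_mul_of_nonneg_left h2 hn0]
      linarith
    refine (LipschitzWith.of_dist_le_mul (K := n) (f := h n) fun x x' => ?_).continuous
    rw [Real.dist_eq, abs_le]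
    have hc : ((n : ℝ≥0) : ℝ) = (n : ℝ) := by push_cast; ring
    constructor
    · have := key x' x
      rw [dist_comm x' x] at this
      rw [hc]
      linarith
    · have := key x x'
      rw [hc]
      linarith
  refine ⟨h, hlip, hnonneg, hofReal_le, hmono, fun x => ?_⟩
  refine le_antisymm (iSup_le fun n => hofReal_le n x) ?_
  by_contra hlt
  push_neg at hlt
  obtain ⟨c, hc1, hc2⟩ := exists_between hlt
  have hcne : c ≠ ⊤ := (hc2.trans_le le_top).ne
  obtain ⟨δ, hδpos, hδ⟩ := Metric.eventually_nhds_iff.mp (hg x c hc2)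
  set n : ℕ := ⌈max c.toReal (c.toReal / δ)⌉₊ with hn
  have hn1 : c.toReal ≤ n := le_trans (le_max_left _ _) (Nat.le_ceil _)
  have hn2 : c.toReal ≤ n * δ := by
    have : c.toReal / δ ≤ n := le_trans (le_max_right _ _) (Nat.le_ceil _)
    calc c.toReal = (c.toReal / δ) * δ := by field_simp
      _ ≤ n * δ := by nlinarith
  have hkey : c.toReal ≤ h n x := by
    refine le_ciInf fun y => ?_
    rcases lt_or_ge (dist y x) δ with hy | hy
    · have hcy : c < g y := hδ hy
      have : (min c (n:ℝ≥0∞)).toReal ≤ (min (g y) n).toReal :=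
        ENNReal.toReal_mono (ne_top_of_le_ne_top (by simp) (min_le_right _ _))
          (min_le_min hcy.le le_rfl)
      have hminc : (min c (n:ℝ≥0∞)).toReal = c.toReal := by
        rw [ENNReal.toReal_min hcne (by simp), min_eq_left]
        simpa using hn1
      have hd : (0:ℝ) ≤ (n:ℝ) * dist x y := by positivity
      nlinarith [this, hminc]
    · have : (n:ℝ) * δ ≤ n * dist x y := by
        rw [dist_comm x y]
        have hn0 : (0:ℝ) ≤ n := Nat.cast_nonneg n
        nlinarith
      have h0 : (0:ℝ) ≤ (min (g y) n).toReal := ENNReal.toReal_nonneg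
      nlinarith
  have : c ≤ ⨆ n, ENNReal.ofReal (h n x) := by
    calc c = ENNReal.ofReal c.toReal := (ENNReal.ofReal_toReal hcne).symm
      _ ≤ ENNReal.ofReal (h n x) := ENNReal.ofReal_le_ofReal hkey
      _ ≤ ⨆ n, ENNReal.ofReal (h n x) := le_iSup (fun n : ℕ => ENNReal.ofReal (h n x)) n
  exact lt_irrefl c (lt_of_le_of_lt this hc1)

end LSCApprox

section Portmanteau

variable {Y : Type*} [MetricSpace Y] [Nonempty Y] [MeasurableSpace Y] [BorelSpace Y]

lemma lintegral_lsc_le_liminf (μs : ℕ → ProbabilityMeasure Y) (ν : ProbabilityMeasure Y)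
    (hcv : Tendsto μs atTop (𝓝 ν)) (g : Y → ℝ≥0∞) (hg : LowerSemicontinuous g) :
    ∫⁻ y, g y ∂(ν : Measure Y) ≤ atTop.liminf (fun k => ∫⁻ y, g y ∂(μs k : Measure Y)) := by
  obtain ⟨h, hcont, hnn, hle, hmono, hsup⟩ := exists_continuous_approx_of_lsc g hg
  have h_opens : ∀ G, IsOpen G → (ν : Measure Y) G ≤ atTop.liminf (fun i => (μs i : Measure Y) G) :=
    fun G hG => ProbabilityMeasure.le_liminf_measure_open_of_tendsto hcv hG
  have key : ∀ n, ∫⁻ y, ENNReal.ofReal (h n y) ∂(ν : Measure Y)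
      ≤ atTop.liminf (fun k => ∫⁻ y, g y ∂(μs k : Measure Y)) := by
    intro n
    calc ∫⁻ y, ENNReal.ofReal (h n y) ∂(ν : Measure Y)
        ≤ atTop.liminf (fun k => ∫⁻ y, ENNReal.ofReal (h n y) ∂(μs k : Measure Y)) :=
          lintegral_le_liminf_lintegral_of_forall_isOpen_measure_le_liminf_measure
            (hcont n) (fun y => hnn n y) h_opens
      _ ≤ atTop.liminf (fun k => ∫⁻ y, g y ∂(μs k : Measure Y)) :=
          liminf_le_liminf (Eventually.of_forall fun k => lintegral_mono fun y => hle n y)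
  calc ∫⁻ y, g y ∂(ν : Measure Y)
      = ∫⁻ y, ⨆ n, ENNReal.ofReal (h n y) ∂(ν : Measure Y) :=
        lintegral_congr fun y => (hsup y).symm
    _ = ⨆ n, ∫⁻ y, ENNReal.ofReal (h n y) ∂(ν : Measure Y) :=
        lintegral_iSup (fun n => (hcont n).measurable.ennreal_ofReal)
          (fun a b hab y => ENNReal.ofReal_le_ofReal (hmono y hab))
    _ ≤ _ := iSup_le key

end Portmanteau

section Compactness

variable {Y : Type*} [MetricSpace Y] [CompactSpace Y] [Nonempty Y]
  [SecondCountableTopology Y] [MeasurableSpace Y] [BorelSpace Y]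

/-- Sequential compactness of the space of probability measures on a compact metric space. -/
lemma exists_subseq_tendsto_probabilityMeasure (μs : ℕ → ProbabilityMeasure Y) :
    ∃ φ : ℕ → ℕ, StrictMono φ ∧ ∃ ν : ProbabilityMeasure Y,
      Tendsto (fun n => μs (φ n)) atTop (𝓝 ν) := by
  -- countable basis
  obtain ⟨b, hbc, hbne, hbasis⟩ := TopologicalSpace.exists_countable_basis Y
  have hbnonempty : b.Nonempty := by
    obtain ⟨v, hvb, -, -⟩ :=
      hbasis.exists_subset_of_mem_open (Set.mem_univ (Classical.arbitrary Y)) isOpen_univ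
    exact ⟨v, hvb⟩
  obtain ⟨e, he⟩ := hbc.exists_eq_range hbnonempty
  have heopen : ∀ i, IsOpen (e i) := fun i =>
    hbasis.isOpen (by rw [he]; exact Set.mem_range_self i)
  set U : Finset ℕ → Set Y := fun s => ⋃ i ∈ s, e i with hU
  set C : Finset ℕ → Set Y := fun s => closure (U s) with hC
  have hUopen : ∀ s, IsOpen (U s) := fun s => isOpen_biUnion fun i _ => heopen i
  have hCclosed : ∀ s, IsClosed (C s) := fun s => isClosed_closure
  have hCU : ∀ s t : Finset ℕ, C (s ∪ t) = C s ∪ C t := by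
    intro s t
    rw [hC]
    simp only
    rw [show U (s ∪ t) = U s ∪ U t by
      rw [hU]; simp only; exact Finset.set_biUnion_union s t e, closure_union]
  -- the covering lemma
  have cover : ∀ (K : Set Y), IsCompact K → ∀ (V : Set Y), IsOpen V → K ⊆ V →
      ∃ s : Finset ℕ, K ⊆ U s ∧ C s ⊆ V := by
    intro K hK V hV hKV
    have hgood : ∀ x ∈ K, ∃ i : ℕ, x ∈ e i ∧ closure (e i) ⊆ V := by
      intro x hx
      obtain ⟨r, hr, hball⟩ := Metric.isOpen_iff.mp hV x (hKV hx)
      obtain ⟨v, hvb, hxv, hvsub⟩ := hbasis.exists_subset_of_mem_open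
        (Metric.mem_ball_self (half_pos hr)) Metric.isOpen_ball
      obtain ⟨i, rfl⟩ : ∃ i, e i = v := by
        have : v ∈ Set.range e := by rw [← he]; exact hvb
        obtain ⟨i, hi⟩ := this
        exact ⟨i, hi⟩
      refine ⟨i, hxv, ?_⟩
      calc closure (e i) ⊆ closure (Metric.ball x (r / 2)) := closure_mono hvsub
        _ ⊆ Metric.closedBall x (r / 2) := Metric.closure_ball_subset_closedBall
        _ ⊆ Metric.ball x r := Metric.closedBall_subset_ball (by linarith)
        _ ⊆ V := hball
    set I : Set ℕ := {i : ℕ | closure (e i) ⊆ V} with hI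
    have hcov : K ⊆ ⋃ i : I, e i.1 := by
      intro x hx
      obtain ⟨i, hxi, hiV⟩ := hgood x hx
      exact Set.mem_iUnion.mpr ⟨⟨i, hiV⟩, hxi⟩
    obtain ⟨T, hT⟩ := hK.elim_finite_subcover (fun i : I => e i.1) (fun i => heopen i.1) hcov
    refine ⟨T.image Subtype.val, ?_, ?_⟩
    · intro x hx
      obtain ⟨i, hiT, hxi⟩ := Set.mem_iUnion₂.mp (hT hx)
      exact Set.mem_iUnion₂.mpr ⟨i.1, Finset.mem_image_of_mem _ hiT, hxi⟩
    · rw [hC]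
      simp only
      rw [Finset.closure_biUnion]
      refine Set.iUnion₂_subset fun i hi => ?_
      obtain ⟨j, hjT, rfl⟩ := Finset.mem_image.mp hi
      exact j.2
  -- extraction of a subsequence
  obtain ⟨α, -, φ, hφmono, hφtend⟩ :=
    IsCompact.tendsto_subseq (x := fun k (s : Finset ℕ) => (μs k : Measure Y) (C s))
      isCompact_univ (fun n => Set.mem_univ _)
  rw [tendsto_pi_nhds] at hφtend
  set m : ℕ → ProbabilityMeasure Y := fun n => μs (φ n) with hm
  have hα : ∀ s, Tendsto (fun n => (m n : Measure Y) (C s)) atTop (𝓝 (α s)) := fun s => hφtend s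
  -- basic properties of α
  have hαle1 : ∀ s, α s ≤ 1 := fun s =>
    le_of_tendsto (hα s) (Eventually.of_forall fun n => prob_le_one)
  have hαmono : ∀ s t : Finset ℕ, s ⊆ t → α s ≤ α t := by
    intro s t hst
    refine le_of_tendsto_of_tendsto' (hα s) (hα t) fun n => measure_mono (closure_mono ?_)
    exact Set.biUnion_subset_biUnion_left hst
  have hαsub : ∀ s t : Finset ℕ, α (s ∪ t) ≤ α s + α t := by
    intro s t
    refine le_of_tendsto_of_tendsto' (hα (s ∪ t)) ((hα s).add (hα t)) fun n => ?_
    rw [hCU]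
    exact measure_union_le _ _
  have hαadd : ∀ s t : Finset ℕ, Disjoint (C s) (C t) → α s + α t ≤ α (s ∪ t) := by
    intro s t hdis
    refine le_of_tendsto_of_tendsto' ((hα s).add (hα t)) (hα (s ∪ t)) fun n => ?_
    rw [hCU]
    exact (measure_union hdis (hCclosed t).measurableSet).symm.le
  -- the regularized set function on compacts
  set lam : Set Y → ℝ≥0∞ := fun K => ⨅ s : {s : Finset ℕ // K ⊆ U s}, α s.1 with hlam
  have hlam_ne : ∀ (K : Set Y), IsCompact K → Nonempty {s : Finset ℕ // K ⊆ U s} := by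
    intro K hK
    obtain ⟨s, hs, -⟩ := cover K hK Set.univ isOpen_univ (Set.subset_univ K)
    exact ⟨⟨s, hs⟩⟩
  have hlam_le_one : ∀ (K : Set Y), IsCompact K → lam K ≤ 1 := by
    intro K hK
    obtain ⟨s⟩ := hlam_ne K hK
    exact le_trans (iInf_le _ s) (hαle1 s.1)
  have hlam_ne_top : ∀ (K : Set Y), IsCompact K → lam K ≠ ⊤ :=
    fun K hK => ne_top_of_le_ne_top ENNReal.one_ne_top (hlam_le_one K hK)
  have hlam_mono : ∀ K₁ K₂ : Set Y, K₁ ⊆ K₂ → lam K₁ ≤ lam K₂ := by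
    intro K₁ K₂ h
    exact le_iInf fun q => iInf_le _ (⟨q.1, h.trans q.2⟩ : {s : Finset ℕ // K₁ ⊆ U s})
  -- general monotonicity of α along closures
  have hαmono' : ∀ s t : Finset ℕ, C s ⊆ C t → α s ≤ α t := by
    intro s t hst
    exact le_of_tendsto_of_tendsto' (hα s) (hα t) fun n => measure_mono hst
  -- subadditivity of lam
  have hlam_sub : ∀ K₁ K₂ : Set Y, IsCompact K₁ → IsCompact K₂ →
      lam (K₁ ∪ K₂) ≤ lam K₁ + lam K₂ := by
    intro K₁ K₂ h1 h2
    haveI := hlam_ne K₁ h1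
    haveI := hlam_ne K₂ h2
    rw [hlam]
    simp only
    rw [ENNReal.iInf_add]
    refine le_iInf fun p => ?_
    rw [ENNReal.add_iInf]
    refine le_iInf fun q => ?_
    have hcov : K₁ ∪ K₂ ⊆ U (p.1 ∪ q.1) := by
      have h : U (p.1 ∪ q.1) = U p.1 ∪ U q.1 := Finset.set_biUnion_union _ _ _
      rw [h]
      exact Set.union_subset (p.2.trans Set.subset_union_left)
        (q.2.trans Set.subset_union_right)
    exact le_trans (iInf_le _ ⟨p.1 ∪ q.1, hcov⟩) (hαsub p.1 q.1)
  -- superadditivity of lam on disjoint compacts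
  have hlam_super : ∀ K₁ K₂ : Set Y, IsCompact K₁ → IsCompact K₂ → Disjoint K₁ K₂ →
      lam K₁ + lam K₂ ≤ lam (K₁ ∪ K₂) := by
    intro K₁ K₂ h1 h2 hdis
    obtain ⟨δ, hδ, hthick⟩ := hdis.exists_thickenings h1 h2.isClosed
    refine le_iInf fun q => ?_
    have hq1 : K₁ ⊆ U q.1 := Set.subset_union_left.trans q.2
    have hq2 : K₂ ⊆ U q.1 := Set.subset_union_right.trans q.2
    obtain ⟨s₁, hs₁, hc₁⟩ := cover K₁ h1 (U q.1 ∩ Metric.thickening δ K₁)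
      ((hUopen q.1).inter Metric.isOpen_thickening)
      (Set.subset_inter hq1 (Metric.self_subset_thickening hδ K₁))
    obtain ⟨s₂, hs₂, hc₂⟩ := cover K₂ h2 (U q.1 ∩ Metric.thickening δ K₂)
      ((hUopen q.1).inter Metric.isOpen_thickening)
      (Set.subset_inter hq2 (Metric.self_subset_thickening hδ K₂))
    have hdisC : Disjoint (C s₁) (C s₂) :=
      hthick.mono (hc₁.trans Set.inter_subset_right) (hc₂.trans Set.inter_subset_right)
    have hsub : C (s₁ ∪ s₂) ⊆ C q.1 := by
      rw [hCU]
      refine Set.union_subset ?_ ?_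
      · exact (hc₁.trans Set.inter_subset_left).trans subset_closure
      · exact (hc₂.trans Set.inter_subset_left).trans subset_closure
    calc lam K₁ + lam K₂ ≤ α s₁ + α s₂ :=
          add_le_add (iInf_le _ (⟨s₁, hs₁⟩ : {s : Finset ℕ // K₁ ⊆ U s}))
            (iInf_le _ (⟨s₂, hs₂⟩ : {s : Finset ℕ // K₂ ⊆ U s}))
      _ ≤ α (s₁ ∪ s₂) := hαadd s₁ s₂ hdisC
      _ ≤ α q.1 := hαmono' _ _ hsub
  -- the content
  set σ : Content Y :=
    { toFun := fun K => (lam K.1).toNNReal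
      mono' := fun K₁ K₂ h =>
        ENNReal.toNNReal_mono (hlam_ne_top _ K₂.2) (hlam_mono _ _ h)
      sup_disjoint' := by
        intro K₁ K₂ hdis h₁c h₂c
        have heq : lam ((K₁ ⊔ K₂ : TopologicalSpace.Compacts Y) : Set Y)
            = lam (K₁ : Set Y) + lam (K₂ : Set Y) := by
          rw [TopologicalSpace.Compacts.coe_sup]
          exact le_antisymm (hlam_sub _ _ K₁.2 K₂.2) (hlam_super _ _ K₁.2 K₂.2 hdis)
        show (lam ((K₁ ⊔ K₂ : TopologicalSpace.Compacts Y) : Set Y)).toNNReal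
            = (lam (K₁ : Set Y)).toNNReal + (lam (K₂ : Set Y)).toNNReal
        rw [heq]
        exact ENNReal.toNNReal_add (hlam_ne_top _ K₁.2) (hlam_ne_top _ K₂.2)
      sup_le' := by
        intro K₁ K₂
        show (lam ((K₁ ⊔ K₂ : TopologicalSpace.Compacts Y) : Set Y)).toNNReal
            ≤ (lam (K₁ : Set Y)).toNNReal + (lam (K₂ : Set Y)).toNNReal
        have h1 : lam ((K₁ ⊔ K₂ : TopologicalSpace.Compacts Y) : Set Y)
            ≤ lam (K₁ : Set Y) + lam (K₂ : Set Y) := by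
          rw [TopologicalSpace.Compacts.coe_sup]
          exact hlam_sub _ _ K₁.2 K₂.2
        have h2 := ENNReal.toNNReal_mono
          (ENNReal.add_ne_top.mpr ⟨hlam_ne_top _ K₁.2, hlam_ne_top _ K₂.2⟩) h1
        rwa [ENNReal.toNNReal_add (hlam_ne_top _ K₁.2) (hlam_ne_top _ K₂.2)] at h2 } with hσ
  have hσ_apply : ∀ K : TopologicalSpace.Compacts Y, (σ.toFun K : ℝ≥0∞) = lam (K : Set Y) := by
    intro K
    show ((lam (K : Set Y)).toNNReal : ℝ≥0∞) = lam (K : Set Y)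
    exact ENNReal.coe_toNNReal (hlam_ne_top _ K.2)
  -- the candidate limit measure
  set P : Measure Y := σ.measure with hP
  have hPopen : ∀ (V : Set Y) (hV : IsOpen V), P V = σ.innerContent ⟨V, hV⟩ := by
    intro V hV
    rw [hP, Content.measure_apply σ hV.measurableSet]
    exact Content.outerMeasure_of_isOpen σ V hV
  have hlam_univ : lam (Set.univ : Set Y) = 1 := by
    refine le_antisymm (hlam_le_one _ isCompact_univ) (le_iInf fun q => ?_)
    have hCuniv : C q.1 = Set.univ := Set.eq_univ_of_univ_subset (q.2.trans subset_closure)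
    have : Tendsto (fun n => (m n : Measure Y) (C q.1)) atTop (𝓝 1) := by
      have : ∀ n, (m n : Measure Y) (C q.1) = 1 := by
        intro n; rw [hCuniv]; exact measure_univ
      simpa [this] using tendsto_const_nhds
    exact (tendsto_nhds_unique (hα q.1) this).symm.le
  have hPuniv : P Set.univ = 1 := by
    rw [hPopen Set.univ isOpen_univ]
    refine le_antisymm ?_ ?_
    · refine iSup₂_le fun K hK => ?_
      calc (σ.toFun K : ℝ≥0∞) = lam (K : Set Y) := hσ_apply K
        _ ≤ 1 := hlam_le_one _ K.2
    · have := σ.le_innerContent ⟨Set.univ, isCompact_univ⟩ ⟨Set.univ, isOpen_univ⟩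
        (by exact Set.Subset.rfl)
      calc (1 : ℝ≥0∞) = lam (Set.univ : Set Y) := hlam_univ.symm
        _ = (σ.toFun ⟨Set.univ, isCompact_univ⟩ : ℝ≥0∞) :=
          (hσ_apply ⟨Set.univ, isCompact_univ⟩).symm
        _ ≤ _ := this
  haveI hPprob : IsProbabilityMeasure P := ⟨hPuniv⟩
  -- the open-set liminf bound
  have hopen_bound : ∀ (V : Set Y), IsOpen V →
      P V ≤ atTop.liminf fun n => (m n : Measure Y) V := by
    intro V hV
    rw [hPopen V hV]
    refine iSup₂_le fun K hK => ?_
    obtain ⟨s, hs, hcs⟩ := cover (K : Set Y) K.2 V hV hK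
    calc (σ.toFun K : ℝ≥0∞) = lam (K : Set Y) := hσ_apply K
      _ ≤ α s := iInf_le _ (⟨s, hs⟩ : {s : Finset ℕ // (K : Set Y) ⊆ U s})
      _ = atTop.liminf (fun n => (m n : Measure Y) (C s)) := (hα s).liminf_eq.symm
      _ ≤ _ := liminf_le_liminf (Eventually.of_forall fun n => measure_mono hcs)
  -- conclusion via portmanteau
  set ν : ProbabilityMeasure Y := ⟨P, hPprob⟩ with hν
  refine ⟨φ, hφmono, ν, ?_⟩
  refine tendsto_of_forall_isOpen_le_liminf fun G hG => ?_
  have aux : (↑(atTop.liminf fun i => (m i) G) : ℝ≥0∞)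
      = atTop.liminf fun i => ((m i) G : ℝ≥0∞) := by
    refine Monotone.map_liminf_of_continuousAt (F := atTop) ENNReal.coe_mono (fun i => (m i) G)
      ENNReal.continuous_coe.continuousAt ?_ ?_
    · exact IsBoundedUnder.isCoboundedUnder_ge
        ⟨1, eventually_map.mpr (Eventually.of_forall fun i =>
          ProbabilityMeasure.apply_le_one _ _)⟩
    · exact ⟨0, eventually_map.mpr (Eventually.of_forall fun i => zero_le)⟩
  rw [← ENNReal.coe_le_coe, aux]
  have hcoe : ((ν G : ℝ≥0) : ℝ≥0∞) = P G :=
    ProbabilityMeasure.ennreal_coeFn_eq_coeFn_toMeasure ν G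
  rw [hcoe]
  have : (atTop.liminf fun i => ((m i) G : ℝ≥0∞))
      = atTop.liminf fun i => (m i : Measure Y) G := by
    simp only [ProbabilityMeasure.ennreal_coeFn_eq_coeFn_toMeasure]
  rw [this]
  exact hopen_bound G hG

end Compactness


section PotentialLSC

lemma le_liminf_of_lsc_of_tendsto {f : ℝ≥0 → ℝ≥0∞} (hf : LowerSemicontinuous f)
    {d : ℝ≥0} {u : ℕ → ℝ≥0} (hu : Tendsto u atTop (𝓝 d)) :
    f d ≤ atTop.liminf fun n => f (u n) := by
  by_contra h
  push_neg at h
  obtain ⟨c, hc1, hc2⟩ := exists_between h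
  have hev : ∀ᶠ n in atTop, c < f (u n) := hu.eventually (hf d c hc2)
  have hle : c ≤ atTop.liminf fun n => f (u n) :=
    le_liminf_of_le (by isBoundedDefault) (hev.mono fun n hn => hn.le)
  exact lt_irrefl c (lt_of_le_of_lt hle hc1)

lemma lowerSemicontinuous_potential_aux {X : Type*} [MetricSpace X] [MeasurableSpace X]
    [BorelSpace X] (f : ℝ≥0 → ℝ≥0∞) (hf : LowerSemicontinuous f) (ν : Measure X) :
    LowerSemicontinuous fun x => ∫⁻ y, f (nndist x y) ∂ν := by
  intro x c hc
  by_contra hcon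
  rw [Filter.not_eventually] at hcon
  have hcon' : ∃ᶠ x' in 𝓝 x, (∫⁻ y, f (nndist x' y) ∂ν) ≤ c :=
    hcon.mono fun x' h => not_lt.mp h
  obtain ⟨u, hu, hule⟩ := Filter.exists_seq_forall_of_frequently hcon'
  have hmeas : ∀ n, Measurable fun y => f (nndist (u n) y) := fun n =>
    hf.measurable.comp ((continuous_const.nndist continuous_id).measurable)
  have hpt : ∀ y, f (nndist x y) ≤ atTop.liminf fun n => f (nndist (u n) y) := fun y =>
    le_liminf_of_lsc_of_tendsto hf (hu.nndist tendsto_const_nhds)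
  have h1 : (∫⁻ y, f (nndist x y) ∂ν)
      ≤ atTop.liminf fun n => ∫⁻ y, f (nndist (u n) y) ∂ν :=
    le_trans (lintegral_mono hpt) (lintegral_liminf_le hmeas)
  have h2 : (atTop.liminf fun n => ∫⁻ y, f (nndist (u n) y) ∂ν) ≤ c := by
    calc (atTop.liminf fun n => ∫⁻ y, f (nndist (u n) y) ∂ν)
        ≤ atTop.liminf fun _ => c := liminf_le_liminf (Eventually.of_forall hule)
      _ = c := liminf_const c
  exact absurd hc (not_lt.mpr (h1.trans h2))

end PotentialLSC


theorem polarization_limit_implies_weak_convergence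
    {t : ℕ} (A : Set (EuclideanSpace ℝ (Fin t))) (hA : IsCompact A)
    (f : ℝ≥0 → ℝ≥0∞) (hf : LowerSemicontinuous f)
    (μeq : Measure (EuclideanSpace ℝ (Fin t))) (hμeq : IsProbabilityMeasure μeq)
    (hμeqA : μeq Aᶜ = 0)
    (hA1 : ∃ μ : Measure (EuclideanSpace ℝ (Fin t)),
      IsProbabilityMeasure μ ∧ μ Aᶜ = 0 ∧ energy f μ < ⊤)
    (hA2min : ∀ ν : Measure (EuclideanSpace ℝ (Fin t)),
      IsProbabilityMeasure ν → ν Aᶜ = 0 → energy f μeq ≤ energy f ν)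
    (hA2uniq : ∀ ν : Measure (EuclideanSpace ℝ (Fin t)),
      IsProbabilityMeasure ν → ν Aᶜ = 0 → energy f ν = energy f μeq → ν = μeq)
    (hA3 : ∀ x ∈ A, ∀ U : Set (EuclideanSpace ℝ (Fin t)), IsOpen U → x ∈ U → 0 < μeq U)
    (W : ℝ≥0∞) (hW : 0 < W) (hA4 : ∀ x ∈ A, potential f μeq x = W)
    (ω : (N : ℕ) → Fin N → EuclideanSpace ℝ (Fin t)) (hω : ∀ N, ∀ i, ω N i ∈ A)
    (hpol : Tendsto (fun N => polarization f A (ω N)) atTop (𝓝 W)) :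
    WeaklyTendsto (fun N => countingMeasure (ω N)) μeq := by
  classical
  have hfmeas : Measurable f := hf.measurable
  have hAmem : ω 1 0 ∈ A := hω 1 0
  haveI hcs : CompactSpace ↥A := isCompact_iff_compactSpace.mp hA
  haveI : Nonempty ↥A := ⟨⟨ω 1 0, hAmem⟩⟩
  have hAmeas : MeasurableSet A := hA.isClosed.measurableSet
  have hker : ∀ x : EuclideanSpace ℝ (Fin t),
      Measurable fun y : EuclideanSpace ℝ (Fin t) => f (nndist x y) :=
    fun x => hfmeas.comp ((continuous_const.nndist continuous_id).measurable)
  have hae_mem : ∀ᵐ x ∂μeq, x ∈ A := by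
    rw [MeasureTheory.ae_iff]
    exact hμeqA
  -- the energy of the equilibrium measure is `W`
  have hEeq : energy f μeq = W := by
    have hae : (fun x => potential f μeq x) =ᵐ[μeq] fun _ => W :=
      hae_mem.mono fun x hx => hA4 x hx
    rw [energy, lintegral_congr_ae hae, lintegral_const, measure_univ, mul_one]
  -- `W` is finite
  have hWfin : W ≠ ⊤ := by
    obtain ⟨μ₀, hμ₀p, hμ₀A, hμ₀E⟩ := hA1
    have h := hA2min μ₀ hμ₀p hμ₀A
    rw [hEeq] at h
    exact (lt_of_le_of_lt h hμ₀E).ne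
  -- the lifted configuration measures
  set Ω : ℕ → Measure ↥A :=
    fun N => (N : ℝ≥0∞)⁻¹ • ∑ i : Fin N, Measure.dirac (⟨ω N i, hω N i⟩ : ↥A) with hΩ
  have hΩprob : ∀ N, N ≠ 0 → IsProbabilityMeasure (Ω N) := by
    intro N hN
    constructor
    rw [hΩ]
    simp only [Measure.smul_apply, smul_eq_mul]
    rw [Measure.finset_sum_apply]
    simp only [measure_univ, Finset.sum_const, Finset.card_univ, Fintype.card_fin,
      nsmul_eq_mul, mul_one]
    exact ENNReal.inv_mul_cancel (by exact_mod_cast hN) (by simp)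
  set P : ℕ → ProbabilityMeasure ↥A := fun N =>
    if h : N = 0 then ⟨Measure.dirac (⟨ω 1 0, hAmem⟩ : ↥A), Measure.dirac.isProbabilityMeasure⟩
    else ⟨Ω N, hΩprob N h⟩ with hPdef
  have hPcoe : ∀ N, N ≠ 0 → (P N : Measure ↥A) = Ω N := by
    intro N h
    simp only [hPdef, dif_neg h]
    exact congrArg Subtype.val (dite_cond_eq_false (eq_false h))
  have hPlint : ∀ (N : ℕ), N ≠ 0 → ∀ x : EuclideanSpace ℝ (Fin t),
      (∫⁻ z, f (nndist x (z : EuclideanSpace ℝ (Fin t))) ∂(P N : Measure ↥A))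
        = discretePotential f (ω N) x := by
    intro N hN x
    rw [hPcoe N hN, hΩ, lintegral_smul_measure, lintegral_finset_sum_measure]
    have hd : ∀ i : Fin N,
        (∫⁻ z, f (nndist x (z : EuclideanSpace ℝ (Fin t)))
          ∂Measure.dirac (⟨ω N i, hω N i⟩ : ↥A)) = f (nndist x (ω N i)) := fun i =>
      lintegral_dirac' _ ((hker x).comp measurable_subtype_coe)
    simp only [hd]
    rfl
  -- the measurability of the discrete potentials
  have hdiscmeas : ∀ N, Measurable fun x => discretePotential f (ω N) x := by
    intro N
    apply Measurable.const_mul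
    exact Finset.measurable_sum _ fun i _ =>
      hfmeas.comp ((continuous_id.nndist continuous_const).measurable)
  -- the μeq-average of each discrete potential is exactly `W`
  have hlint_disc : ∀ N, N ≠ 0 → (∫⁻ x, discretePotential f (ω N) x ∂μeq) = W := by
    intro N hN
    have hterm : ∀ i : Fin N, (∫⁻ x, f (nndist x (ω N i)) ∂μeq) = W := by
      intro i
      calc (∫⁻ x, f (nndist x (ω N i)) ∂μeq) = potential f μeq (ω N i) := by
            rw [potential]
            exact lintegral_congr fun x => by rw [nndist_comm]
        _ = W := hA4 _ (hω N i)
    have hm : ∀ i : Fin N, Measurable fun x => f (nndist x (ω N i)) := fun i =>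
      hfmeas.comp ((continuous_id.nndist continuous_const).measurable)
    calc (∫⁻ x, discretePotential f (ω N) x ∂μeq)
        = (N : ℝ≥0∞)⁻¹ * ∫⁻ x, ∑ i, f (nndist x (ω N i)) ∂μeq := by
          rw [← lintegral_const_mul _ (Finset.measurable_sum _ fun i _ => hm i)]
          rfl
      _ = (N : ℝ≥0∞)⁻¹ * ∑ i, ∫⁻ x, f (nndist x (ω N i)) ∂μeq := by
          rw [lintegral_finset_sum _ fun i _ => hm i]
      _ = (N : ℝ≥0∞)⁻¹ * ((N : ℝ≥0∞) * W) := by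
          simp only [hterm, Finset.sum_const, Finset.card_univ, Fintype.card_fin, nsmul_eq_mul]
      _ = W := by
          rw [← mul_assoc, ENNReal.inv_mul_cancel (by exact_mod_cast hN) (by simp), one_mul]
  -- the main argument
  intro g
  refine tendsto_of_subseq_tendsto fun ns hns => ?_
  obtain ⟨ms, hms, ν', hν'⟩ := exists_subseq_tendsto_probabilityMeasure (fun k => P (ns k))
  refine ⟨ms, ?_⟩
  set φ : ℕ → ℕ := fun n => ns (ms n) with hφdef
  have hφtop : Tendsto φ atTop atTop := hns.comp hms.tendsto_atTop
  have hν'' : Tendsto (fun n => P (φ n)) atTop (𝓝 ν') := hν'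
  set νm : Measure (EuclideanSpace ℝ (Fin t)) := Measure.map Subtype.val (ν' : Measure ↥A)
    with hνm
  haveI hν'pm : IsProbabilityMeasure (ν' : Measure ↥A) := ν'.2
  haveI : IsProbabilityMeasure νm := by
    rw [hνm]
    exact Measure.isProbabilityMeasure_map measurable_subtype_coe.aemeasurable
  have hνmA : νm Aᶜ = 0 := by
    rw [hνm, Measure.map_apply measurable_subtype_coe hAmeas.compl]
    have : (Subtype.val : ↥A → EuclideanSpace ℝ (Fin t)) ⁻¹' Aᶜ = ∅ := by
      ext z
      simp [z.2]
    rw [this, measure_empty]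
  have hpotmap : ∀ x, potential f νm x
      = ∫⁻ z, f (nndist x (z : EuclideanSpace ℝ (Fin t))) ∂(ν' : Measure ↥A) := by
    intro x
    rw [hνm, potential, lintegral_map (hker x) measurable_subtype_coe]
  -- the liminf of discrete potentials
  set L : EuclideanSpace ℝ (Fin t) → ℝ≥0∞ :=
    fun x => atTop.liminf fun n => discretePotential f (ω (φ n)) x with hLdef
  -- descent: the potential of the limit measure is below `L`
  have hdescent : ∀ x, potential f νm x ≤ L x := by
    intro x
    rw [hpotmap x]
    have hlsc : LowerSemicontinuous
        fun z : ↥A => f (nndist x (z : EuclideanSpace ℝ (Fin t))) :=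
      hf.comp (continuous_const.nndist continuous_subtype_val)
    refine (lintegral_lsc_le_liminf (fun k => P (φ k)) ν' hν'' _ hlsc).trans ?_
    have hev : ∀ᶠ n in atTop,
        (∫⁻ z, f (nndist x (z : EuclideanSpace ℝ (Fin t))) ∂(P (φ n) : Measure ↥A))
          = discretePotential f (ω (φ n)) x := by
      filter_upwards [hφtop.eventually_ge_atTop 1] with n hn
      exact hPlint (φ n) (by omega) x
    exact le_of_eq (liminf_congr hev)
  -- `L ≥ W` on `A`
  have hLgeW : ∀ x ∈ A, W ≤ L x := by
    intro x hx
    have hWl : W = atTop.liminf fun n => polarization f A (ω (φ n)) :=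
      ((hpol.comp hφtop).liminf_eq).symm
    rw [hWl, hLdef]
    exact liminf_le_liminf (Eventually.of_forall fun n => iInf₂_le x hx)
  -- `L` is measurable, and its μeq-integral is at most `W` by Fatou
  have hLmeas : Measurable L := Measurable.liminf fun n => hdiscmeas (φ n)
  have hLint : (∫⁻ x, L x ∂μeq) ≤ W := by
    calc (∫⁻ x, L x ∂μeq)
        ≤ atTop.liminf fun n => ∫⁻ x, discretePotential f (ω (φ n)) x ∂μeq :=
          lintegral_liminf_le fun n => hdiscmeas (φ n)
      _ ≤ W := by
          have hev : ∀ᶠ n in atTop,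
              (∫⁻ x, discretePotential f (ω (φ n)) x ∂μeq) = W := by
            filter_upwards [hφtop.eventually_ge_atTop 1] with n hn
            exact hlint_disc _ (by omega)
          exact le_of_eq ((liminf_congr hev).trans (liminf_const W))
  -- hence `L ≤ W` μeq-almost everywhere
  have hLae : ∀ᵐ x ∂μeq, L x ≤ W := by
    have hWleL : (fun _ => W) ≤ᵐ[μeq] L := hae_mem.mono fun x hx => hLgeW x hx
    have hWint : (∫⁻ _, W ∂μeq) = W := by rw [lintegral_const, measure_univ, mul_one]
    have hsub : (∫⁻ x, L x - W ∂μeq) = 0 := by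
      rw [lintegral_sub measurable_const (by rw [hWint]; exact hWfin) hWleL, hWint]
      exact tsub_eq_zero_of_le hLint
    have := (lintegral_eq_zero_iff (hLmeas.sub measurable_const)).mp hsub
    filter_upwards [this] with x hx
    exact tsub_eq_zero_iff_le.mp hx
  -- so the potential of `νm` is `≤ W` μeq-a.e., and by lower semicontinuity and
  -- the full support of `μeq`, everywhere on `A`
  have hpot_ae : ∀ᵐ x ∂μeq, potential f νm x ≤ W :=
    hLae.mono fun x hx => (hdescent x).trans hx
  have hlscU : LowerSemicontinuous fun x => potential f νm x :=
    lowerSemicontinuous_potential_aux f hf νm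
  have hopenG : IsOpen {x | W < potential f νm x} :=
    lowerSemicontinuous_iff_isOpen_preimage.mp hlscU W
  have hGnull : μeq {x | W < potential f νm x} = 0 := by
    rw [MeasureTheory.ae_iff] at hpot_ae
    convert hpot_ae using 2
    ext x
    simp [not_le]
  have hpotle : ∀ x ∈ A, potential f νm x ≤ W := by
    intro x hx
    by_contra hgt
    push_neg at hgt
    have hpos := hA3 x hx _ hopenG hgt
    rw [hGnull] at hpos
    exact lt_irrefl 0 hpos
  -- energy comparison and uniqueness
  have hνm_aeA : ∀ᵐ x ∂νm, x ∈ A := by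
    rw [MeasureTheory.ae_iff]
    exact hνmA
  have hEνm : energy f νm ≤ W := by
    calc energy f νm ≤ ∫⁻ _, W ∂νm :=
          lintegral_mono_ae (hνm_aeA.mono fun x hx => hpotle x hx)
      _ = W := by rw [lintegral_const, measure_univ, mul_one]
  have hEν_eq : energy f νm = energy f μeq :=
    le_antisymm (by rw [hEeq]; exact hEνm) (hA2min νm inferInstance hνmA)
  have hfinal : νm = μeq := hA2uniq νm inferInstance hνmA hEν_eq
  -- transfer the weak convergence
  set g' : ↥A →ᵇ ℝ :=
    g.compContinuous (⟨Subtype.val, continuous_subtype_val⟩ : C(↥A, EuclideanSpace ℝ (Fin t)))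
    with hg'
  have hint := ProbabilityMeasure.tendsto_iff_forall_integral_tendsto.mp hν'' g'
  have hlimit : (∫ z, g' z ∂(ν' : Measure ↥A)) = ∫ x, g x ∂μeq := by
    rw [← hfinal, hνm,
      integral_map measurable_subtype_coe.aemeasurable g.continuous.aestronglyMeasurable]
    rfl
  have hterm : ∀ᶠ n in atTop, (∫ z, g' z ∂(P (φ n) : Measure ↥A))
      = ∫ x, g x ∂(countingMeasure (ω (φ n))) := by
    filter_upwards [hφtop.eventually_ge_atTop 1] with n hn
    have hN : φ n ≠ 0 := by omega
    rw [hPcoe _ hN, hΩ, countingMeasure, integral_smul_measure, integral_smul_measure]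
    congr 1
    rw [integral_finset_sum_measure fun i _ => g'.integrable _,
      integral_finset_sum_measure fun i _ => g.integrable _]
    refine Finset.sum_congr rfl fun i _ => ?_
    rw [integral_dirac, integral_dirac]
    rfl
  rw [hlimit] at hint
  exact Tendsto.congr' hterm hint
end
end

section
/- Let the compact set A and lower semicontinuous kernel K satisfy assumptions (A1)-(A4). Then lim_{N→∞} 𝒫(A,N) = W_K, where 𝒫(A,N) = sup_{ω_N ∈ A^N} P(ω_N) is the optimal N-point polarization of A. -/
open MeasureTheory Filter Topology BoundedContinuousFunction NNReal ENNReal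

noncomputable section

def gApprox (f : ℝ≥0 → ℝ≥0∞) (n : ℕ) (r : ℝ≥0) : ℝ≥0∞ :=
  ⨅ s : ℝ≥0, min (f s) n + n * edist r s

lemma gApprox_le_self (f : ℝ≥0 → ℝ≥0∞) (n : ℕ) (r : ℝ≥0) :
    gApprox f n r ≤ min (f r) n := by
  simpa [gApprox] using iInf_le (fun s : ℝ≥0 => min (f s) n + (n : ℝ≥0∞) * edist r s) r

lemma gApprox_le_f (f : ℝ≥0 → ℝ≥0∞) (n : ℕ) (r : ℝ≥0) : gApprox f n r ≤ f r :=
  (gApprox_le_self f n r).trans (min_le_left _ _)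

lemma gApprox_le_n (f : ℝ≥0 → ℝ≥0∞) (n : ℕ) (r : ℝ≥0) : gApprox f n r ≤ n :=
  (gApprox_le_self f n r).trans (min_le_right _ _)

lemma gApprox_lip (f : ℝ≥0 → ℝ≥0∞) (n : ℕ) (r r' : ℝ≥0) :
    gApprox f n r ≤ gApprox f n r' + n * edist r r' := by
  conv_rhs => rw [gApprox, ENNReal.iInf_add]
  refine le_iInf fun s => ?_
  calc gApprox f n r ≤ min (f s) n + n * edist r s := iInf_le _ s
    _ ≤ min (f s) n + n * (edist r' s + edist r r') := by
        gcongr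
        rw [add_comm]
        exact edist_triangle _ _ _
    _ = min (f s) n + (n : ℝ≥0∞) * edist r' s + n * edist r r' := by ring

lemma gApprox_mono (f : ℝ≥0 → ℝ≥0∞) : Monotone (gApprox f) := by
  intro m n hmn r
  refine iInf_mono fun s => ?_
  have : (m : ℝ≥0∞) ≤ n := by exact_mod_cast hmn
  gcongr

lemma gApprox_iSup (f : ℝ≥0 → ℝ≥0∞) (hf : LowerSemicontinuous f) (r : ℝ≥0) :
    ⨆ n, gApprox f n r = f r := by
  refine le_antisymm (iSup_le fun n => gApprox_le_f f n r) ?_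
  refine le_of_forall_lt fun c hc => ?_
  obtain ⟨c', hcc', hc'⟩ := exists_between hc
  have hc'top : c' ≠ ⊤ := hc'.ne_top
  obtain ⟨δ, hδ, hball⟩ := Metric.eventually_nhds_iff.mp (hf r c' hc')
  obtain ⟨n₁, hn₁⟩ := ENNReal.exists_nat_gt hc'top
  obtain ⟨n₂, hn₂⟩ := ENNReal.exists_nat_gt (r := c' / ENNReal.ofReal δ)
    (ENNReal.div_lt_top hc'top (by simp [ENNReal.ofReal_eq_zero, not_le, hδ])).ne
  set n := max n₁ n₂ with hn
  have key : c' ≤ gApprox f n r := by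
    refine le_iInf fun s => ?_
    rcases lt_or_ge (dist s r) δ with h | h
    · have h1 : c' ≤ min (f s) n := by
        refine le_min (hball h).le ?_
        exact hn₁.le.trans (by exact_mod_cast Nat.cast_le.2 (le_max_left n₁ n₂))
      exact h1.trans le_self_add
    · have h2 : c' ≤ (n : ℝ≥0∞) * edist r s := by
        have hδ0 : ENNReal.ofReal δ ≠ 0 := by
          simp [ENNReal.ofReal_eq_zero, not_le, hδ]
        have : c' ≤ (n₂ : ℝ≥0∞) * ENNReal.ofReal δ := by
          rw [← ENNReal.div_le_iff_le_mul (Or.inl hδ0) (Or.inl ENNReal.ofReal_ne_top)]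
          exact hn₂.le
        refine this.trans ?_
        have hde : ENNReal.ofReal δ ≤ edist r s := by
          rw [edist_dist]
          exact ENNReal.ofReal_le_ofReal (by rw [dist_comm]; exact h)
        gcongr
        exact_mod_cast Nat.cast_le.2 (le_max_right n₁ n₂)
      exact h2.trans le_add_self
  calc c < c' := hcc'
    _ ≤ gApprox f n r := key
    _ ≤ ⨆ n, gApprox f n r := le_iSup (fun n => gApprox f n r) n

lemma gApprox_lsc (f : ℝ≥0 → ℝ≥0∞) (n : ℕ) : LowerSemicontinuous (gApprox f n) := by
  intro r c hc
  obtain ⟨c', hcc', hc'⟩ := exists_between hc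
  rcases Nat.eq_zero_or_pos n with rfl | hn
  · refine Eventually.of_forall fun s => ?_
    have : gApprox f 0 r ≤ gApprox f 0 s := by
      simpa using gApprox_lip f 0 r s
    exact hc.trans_le this
  · have hη : (0:ℝ) < (c' - c).toReal / n := by
      apply div_pos _ (by positivity)
      apply ENNReal.toReal_pos (tsub_pos_of_lt hcc').ne' (by finiteness)
    rw [Metric.eventually_nhds_iff]
    refine ⟨_, hη, fun {s} hs => ?_⟩
    by_contra hle
    push_neg at hle
    have lip := gApprox_lip f n r s
    have hed : (n:ℝ≥0∞) * edist r s ≤ c' - c := by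
      have h1 : edist r s ≤ ENNReal.ofReal ((c' - c).toReal / n) := by
        rw [edist_dist]
        exact ENNReal.ofReal_le_ofReal (by rw [dist_comm]; exact hs.le)
      calc (n:ℝ≥0∞) * edist r s ≤ (n:ℝ≥0∞) * ENNReal.ofReal ((c' - c).toReal / n) := by gcongr
        _ = ENNReal.ofReal ((n:ℝ) * ((c' - c).toReal / n)) := by
            rw [ENNReal.ofReal_mul (by positivity), ENNReal.ofReal_natCast]
        _ = ENNReal.ofReal ((c' - c).toReal) := by
            congr 1
            field_simp
        _ = c' - c := ENNReal.ofReal_toReal (by finiteness)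
    have h2 : gApprox f n r ≤ c + (c' - c) := lip.trans (by gcongr)
    have hle2 : gApprox f n r ≤ c' := by
      rwa [add_tsub_cancel_of_le hcc'.le] at h2
    exact hc'.not_ge hle2

lemma nndist_nndist_le {E : Type*} [PseudoMetricSpace E] (x y p : E) :
    edist (nndist x y) (nndist x p) ≤ (nndist y p : ℝ≥0∞) := by
  rw [edist_nndist]
  norm_cast
  rw [NNReal.nndist_eq]
  refine max_le (tsub_le_iff_right.2 ?_) (tsub_le_iff_right.2 ?_)
  · rw [add_comm, nndist_comm y p]
    exact nndist_triangle x p y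
  · rw [add_comm]
    exact nndist_triangle x y p

lemma maxPolarization_le_W {t : ℕ} {A : Set (EuclideanSpace ℝ (Fin t))}
    {f : ℝ≥0 → ℝ≥0∞} (hf : LowerSemicontinuous f)
    {μeq : Measure (EuclideanSpace ℝ (Fin t))} (hμeq : IsProbabilityMeasure μeq)
    (hμeqA : μeq Aᶜ = 0) {W : ℝ≥0∞} (hA4 : ∀ x ∈ A, potential f μeq x = W)
    {N : ℕ} (hN : N ≠ 0) : maxPolarization f A N ≤ W := by
  refine iSup_le fun ω => iSup_le fun hω => ?_
  have hmeas : ∀ a : EuclideanSpace ℝ (Fin t), Measurable (fun x => f (nndist x a)) :=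
    fun a => hf.measurable.comp (continuous_id.nndist continuous_const).measurable
  have hae : ∀ᵐ x ∂μeq, polarization f A ω ≤ discretePotential f ω x := by
    rw [ae_iff]
    refine measure_mono_null (fun x hx => ?_) hμeqA
    simp only [Set.mem_setOf_eq, not_le] at hx
    intro hxA
    exact absurd (biInf_le (fun x => discretePotential f ω x) hxA) hx.not_ge
  calc polarization f A ω = ∫⁻ _, polarization f A ω ∂μeq := by
        simp [lintegral_const]
    _ ≤ ∫⁻ x, discretePotential f ω x ∂μeq := lintegral_mono_ae hae
    _ = (N:ℝ≥0∞)⁻¹ * ∑ i, potential f μeq (ω i) := by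
        unfold discretePotential
        rw [lintegral_const_mul' _ _ (ENNReal.inv_ne_top.2 (by exact_mod_cast hN))]
        congr 1
        rw [lintegral_finset_sum _ (fun i _ => hmeas (ω i))]
        refine Finset.sum_congr rfl fun i _ => ?_
        unfold potential
        congr 1
        funext y
        rw [nndist_comm]
    _ = (N:ℝ≥0∞)⁻¹ * ∑ _i : Fin N, W := by
        congr 1
        exact Finset.sum_congr rfl fun i _ => hA4 _ (hω i)
    _ = (N:ℝ≥0∞)⁻¹ * ((N : ℝ≥0∞) * W) := by
        rw [Finset.sum_const, Finset.card_univ, Fintype.card_fin, nsmul_eq_mul]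
    _ = W := by
        rw [← mul_assoc, ENNReal.inv_mul_cancel (by exact_mod_cast hN) (by simp), one_mul]

lemma W_ne_top {t : ℕ} {A : Set (EuclideanSpace ℝ (Fin t))}
    {f : ℝ≥0 → ℝ≥0∞}
    {μeq : Measure (EuclideanSpace ℝ (Fin t))} (hμeq : IsProbabilityMeasure μeq)
    (hμeqA : μeq Aᶜ = 0) {W : ℝ≥0∞} (hA4 : ∀ x ∈ A, potential f μeq x = W)
    (hfin : ∫⁻ x, potential f μeq x ∂μeq < ⊤) : W ≠ ⊤ := by
  have hae : ∀ᵐ x ∂μeq, potential f μeq x = W := by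
    rw [ae_iff]
    exact measure_mono_null (fun x hx hxA => hx (hA4 x hxA)) hμeqA
  have : ∫⁻ x, potential f μeq x ∂μeq = W := by
    rw [lintegral_congr_ae hae]
    simp [lintegral_const]
  rw [this] at hfin
  exact hfin.ne

lemma exists_config {X : Type*} [MetricSpace X] [MeasurableSpace X] [OpensMeasurableSpace X]
    {A : Set X} (hA : IsCompact A) (hAne : A.Nonempty)
    {μ : Measure X} (hμ : IsProbabilityMeasure μ) (hμA : μ Aᶜ = 0)
    (g : ℝ≥0 → ℝ≥0∞) (n : ℕ)
    (hglip : ∀ r r' : ℝ≥0, g r ≤ g r' + n * edist r r')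
    (hgbd : ∀ r, g r ≤ n) (hgm : Measurable g)
    {b c' : ℝ≥0∞} (hb : b ≠ ⊤) (hc'b : c' < b)
    (hP : ∀ x ∈ A, b < ∫⁻ y, g (nndist x y) ∂μ) :
    ∃ N₀ : ℕ, ∀ N ≥ N₀, ∃ ω : Fin N → X, (∀ i, ω i ∈ A) ∧
      ∀ x ∈ A, c' ≤ (N : ℝ≥0∞)⁻¹ * ∑ i, g (nndist x (ω i)) := by
  classical
  set e : ℝ≥0∞ := b - c' with he_def
  have he0 : e ≠ 0 := (tsub_pos_of_lt hc'b).ne'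
  have hetop : e ≠ ⊤ := by finiteness
  set e2 : ℝ≥0∞ := e / 2 with he2_def
  have he20 : e2 ≠ 0 := by
    simp [he2_def, ENNReal.div_eq_zero_iff, he0]
  have he2top : e2 ≠ ⊤ := (ENNReal.div_lt_top hetop (by norm_num)).ne
  -- choose the mesh size δ
  set δ : ℝ≥0∞ := e2 / (n + 1) with hδ_def
  have hδ0 : δ ≠ 0 := by
    simp [hδ_def, ENNReal.div_eq_zero_iff, he20]
  have hδtop : δ ≠ ⊤ := (ENNReal.div_lt_top he2top (by simp)).ne
  have hnδ : (n : ℝ≥0∞) * δ ≤ e2 := by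
    calc (n : ℝ≥0∞) * δ ≤ ((n : ℝ≥0∞) + 1) * δ := by gcongr; exact le_self_add
      _ = e2 := by
          rw [hδ_def]
          exact ENNReal.mul_div_cancel (by simp) (by finiteness)
  set δr : ℝ := δ.toReal with hδr_def
  have hδr0 : 0 < δr := ENNReal.toReal_pos hδ0 hδtop
  -- finite cover of A by balls of radius δr / 2
  obtain ⟨t₂, ht₂⟩ := hA.elim_finite_subcover
    (fun z : A => Metric.ball (z : X) (δr / 2)) (fun z => Metric.isOpen_ball)
    (fun x hx => Set.mem_iUnion.2 ⟨⟨x, hx⟩, Metric.mem_ball_self (by positivity)⟩)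
  set zl : List A := t₂.toList with hzl_def
  set k : ℕ := zl.length with hk_def
  -- the partition
  set E : Fin k → Set X := fun j =>
    (A ∩ Metric.ball (zl.get j : X) (δr / 2)) \
      ⋃ (i : Fin k) (_ : (i : ℕ) < (j : ℕ)), Metric.ball (zl.get i : X) (δr / 2) with hE_def
  have hEmeas : ∀ j, MeasurableSet (E j) := fun j =>
    ((hA.isClosed.measurableSet.inter measurableSet_ball).diff
      (MeasurableSet.iUnion fun i => MeasurableSet.iUnion fun _ => measurableSet_ball))
  have hEsubA : ∀ j, E j ⊆ A := fun j x hx => hx.1.1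
  have hEdisj : Pairwise (Function.onFun Disjoint E) := by
    intro i j hij
    rcases hij.lt_or_gt with h | h
    · refine Set.disjoint_left.2 fun x hxi hxj => ?_
      exact hxj.2 (Set.mem_iUnion.2 ⟨i, Set.mem_iUnion.2 ⟨h, hxi.1.2⟩⟩)
    · refine Set.disjoint_left.2 fun x hxi hxj => ?_
      exact hxi.2 (Set.mem_iUnion.2 ⟨j, Set.mem_iUnion.2 ⟨h, hxj.1.2⟩⟩)
  have hEdiam : ∀ j, ∀ y ∈ E j, ∀ p ∈ E j, (nndist y p : ℝ≥0∞) ≤ δ := by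
    intro j y hy p hp
    have hd : dist y p ≤ δr := by
      have h1 := hy.1.2
      have h2 := hp.1.2
      rw [Metric.mem_ball] at h1 h2
      calc dist y p ≤ dist y (zl.get j : X) + dist (zl.get j : X) p := dist_triangle _ _ _
        _ ≤ δr / 2 + δr / 2 := by
            rw [dist_comm (zl.get j : X) p]; exact add_le_add h1.le h2.le
        _ = δr := by ring
    rw [← edist_nndist, edist_dist]
    exact (ENNReal.ofReal_le_ofReal hd).trans (le_of_eq (ENNReal.ofReal_toReal hδtop))
  have hEuniv : ⋃ j, E j = A := by
    refine Set.Subset.antisymm (Set.iUnion_subset hEsubA) fun x hx => ?_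
    have hxcov : ∃ j : Fin k, x ∈ Metric.ball (zl.get j : X) (δr / 2) := by
      obtain ⟨z, hz, hxz⟩ := Set.mem_iUnion₂.1 (ht₂ hx)
      obtain ⟨j, hj⟩ := List.mem_iff_get.1 (Finset.mem_toList.2 hz)
      exact ⟨j, by rw [hj]; exact hxz⟩
    set Fj : Finset (Fin k) :=
      Finset.univ.filter (fun j => x ∈ Metric.ball (zl.get j : X) (δr / 2)) with hFj_def
    have hFjne : Fj.Nonempty := by
      obtain ⟨j, hj⟩ := hxcov
      exact ⟨j, Finset.mem_filter.2 ⟨Finset.mem_univ _, hj⟩⟩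
    set jm := Fj.min' hFjne with hjm_def
    have hjmem : x ∈ Metric.ball (zl.get jm : X) (δr / 2) := by
      have := Fj.min'_mem hFjne
      simp only [hFj_def, Finset.mem_filter] at this
      exact this.2
    refine Set.mem_iUnion.2 ⟨jm, ⟨⟨hx, hjmem⟩, fun hmem => ?_⟩⟩
    obtain ⟨i, hi⟩ := Set.mem_iUnion.1 hmem
    obtain ⟨hilt, hiball⟩ := Set.mem_iUnion.1 hi
    have : jm ≤ i := Fj.min'_le i (Finset.mem_filter.2 ⟨Finset.mem_univ _, hiball⟩)
    exact absurd hilt (by simpa using this)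
  set m : Fin k → ℝ≥0∞ := fun j => μ (E j) with hm_def
  have hmtop : ∀ j, m j ≠ ⊤ := fun j => measure_ne_top μ _
  have hμA1 : μ A = 1 := by
    have h1 := measure_add_measure_compl (μ := μ) (hEuniv ▸ MeasurableSet.iUnion hEmeas)
    rw [hμA, add_zero, measure_univ] at h1
    exact h1
  have hsum_m : ∑ j, m j = 1 := by
    rw [hm_def, ← tsum_fintype (L := .unconditional _), ← measure_iUnion hEdisj hEmeas, hEuniv, hμA1]
  set p : Fin k → X := fun j => if h : (E j).Nonempty then h.some else hAne.some with hp_def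
  have hpE : ∀ j, (E j).Nonempty → p j ∈ E j := by
    intro j h
    simp only [hp_def, dif_pos h]
    exact h.some_mem
  have hpA : ∀ j, p j ∈ A := by
    intro j
    by_cases h : (E j).Nonempty
    · exact hEsubA j (hpE j h)
    · simp only [hp_def, dif_neg h]
      exact hAne.some_mem
  -- the "potential at sample points" function
  set F : X → Fin k → ℝ≥0∞ := fun x j => g (nndist x (p j)) with hF_def
  have hpart : ∀ x, ∀ j, ∫⁻ y in E j, g (nndist x y) ∂μ ≤ (F x j + n * δ) * m j := by
    intro x j
    rcases (E j).eq_empty_or_nonempty with h | h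
    · simp [h]
    · calc ∫⁻ y in E j, g (nndist x y) ∂μ ≤ ∫⁻ _ in E j, (F x j + n * δ) ∂μ := by
            refine setLIntegral_mono' (hEmeas j) fun y hy => ?_
            calc g (nndist x y) ≤ g (nndist x (p j)) + n * edist (nndist x y) (nndist x (p j)) :=
                  hglip _ _
              _ ≤ F x j + n * δ := by
                  gcongr
                  exact (nndist_nndist_le x y (p j)).trans (hEdiam j y hy (p j) (hpE j h))
        _ = (F x j + n * δ) * m j := by rw [setLIntegral_const]
  have hmain : ∀ x ∈ A, b ≤ (∑ j, F x j * m j) + e2 := by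
    intro x hx
    have hsplit : ∫⁻ y, g (nndist x y) ∂μ = ∑ j, ∫⁻ y in E j, g (nndist x y) ∂μ := by
      have hU : MeasurableSet (⋃ j, E j) := MeasurableSet.iUnion hEmeas
      rw [← lintegral_add_compl (fun y => g (nndist x y)) hU,
        lintegral_iUnion hEmeas hEdisj, tsum_fintype,
        setLIntegral_measure_zero _ _ (by rw [hEuniv]; exact hμA), add_zero]
    have h1 : b < ∑ j, ∫⁻ y in E j, g (nndist x y) ∂μ := hsplit ▸ hP x hx
    calc b ≤ ∑ j, ∫⁻ y in E j, g (nndist x y) ∂μ := h1.le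
      _ ≤ ∑ j, (F x j + n * δ) * m j := Finset.sum_le_sum fun j _ => hpart x j
      _ = (∑ j, F x j * m j) + (n * δ) * ∑ j, m j := by
          rw [Finset.mul_sum, ← Finset.sum_add_distrib]
          exact Finset.sum_congr rfl fun j _ => by ring
      _ = (∑ j, F x j * m j) + n * δ := by rw [hsum_m, mul_one]
      _ ≤ (∑ j, F x j * m j) + e2 := by gcongr
  -- choose N₀
  obtain ⟨N₁, hN₁⟩ := ENNReal.exists_nat_gt
    (r := (k * n : ℝ≥0∞) / e2) ((ENNReal.div_lt_top (by finiteness) he20).ne)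
  refine ⟨max N₁ 1, fun N hN => ?_⟩
  have hN0 : N ≠ 0 := by
    have := le_trans (le_max_right N₁ 1) hN
    omega
  have hNtop : (N : ℝ≥0∞) ≠ ⊤ := by finiteness
  have hNne : (N : ℝ≥0∞) ≠ 0 := by exact_mod_cast hN0
  set nj : Fin k → ℕ := fun j => ⌊(N : ℝ) * (m j).toReal⌋₊ with hnj_def
  have hnj_le : ∀ j, m j ≤ ((nj j : ℝ≥0∞) + 1) / N := by
    intro j
    rw [ENNReal.le_div_iff_mul_le (Or.inl hNne) (Or.inl hNtop)]
    have hreal : (m j).toReal * N ≤ (nj j : ℝ) + 1 := by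
      rw [mul_comm]
      exact (Nat.lt_floor_add_one _).le
    calc m j * N = ENNReal.ofReal ((m j).toReal * N) := by
          rw [ENNReal.ofReal_mul ENNReal.toReal_nonneg, ENNReal.ofReal_toReal (hmtop j),
            ENNReal.ofReal_natCast]
      _ ≤ ENNReal.ofReal ((nj j : ℝ) + 1) := ENNReal.ofReal_le_ofReal hreal
      _ = (nj j : ℝ≥0∞) + 1 := by
          rw [← ENNReal.ofReal_one, ← ENNReal.ofReal_natCast (nj j),
            ← ENNReal.ofReal_add (by positivity) (by norm_num)]
  have hsum_nj : ∑ j, nj j ≤ N := by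
    have hreal : (∑ j, (nj j : ℝ)) ≤ (N : ℝ) := by
      calc (∑ j, (nj j : ℝ)) ≤ ∑ j, (N : ℝ) * (m j).toReal :=
            Finset.sum_le_sum fun j _ => Nat.floor_le (by positivity)
        _ = (N : ℝ) * (∑ j, m j).toReal := by
            rw [ENNReal.toReal_sum fun j _ => hmtop j, Finset.mul_sum]
        _ = N := by rw [hsum_m]; simp
    have hreal2 : ((∑ j, nj j : ℕ) : ℝ) ≤ (N : ℝ) := by
      rw [Nat.cast_sum]
      exact hreal
    exact_mod_cast hreal2
  -- the configuration
  set l0 : List X := (List.ofFn fun j => List.replicate (nj j) (p j)).flatten with hl0_def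
  have hl0len : l0.length = ∑ j, nj j := by
    rw [hl0_def, List.length_flatten, List.map_ofFn]
    rw [List.sum_ofFn]
    simp
  set lpts : List X := l0 ++ List.replicate (N - l0.length) hAne.some with hlpts_def
  have hlen : lpts.length = N := by
    rw [hlpts_def, List.length_append, List.length_replicate]
    rw [hl0len]
    omega
  have hlptsA : ∀ q ∈ lpts, q ∈ A := by
    intro q hq
    rw [hlpts_def] at hq
    rcases List.mem_append.1 hq with h | h
    · rw [hl0_def] at h
      obtain ⟨l', hl', hq'⟩ := List.mem_flatten.1 h
      obtain ⟨j, hj⟩ := List.mem_ofFn.1 hl'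
      rw [← hj] at hq'
      rw [List.eq_of_mem_replicate hq']
      exact hpA j
    · rw [List.eq_of_mem_replicate h]
      exact hAne.some_mem
  refine ⟨fun i => lpts.get (Fin.cast hlen.symm i), ?_, ?_⟩
  · intro i
    exact hlptsA _ (List.get_mem lpts _)
  · intro x hx
    have hsum_eq : ∑ i : Fin N, g (nndist x (lpts.get (Fin.cast hlen.symm i)))
        = (lpts.map (fun q => g (nndist x q))).sum := by
      rw [← List.ofFn_getElem_eq_map, List.sum_ofFn]
      exact Fintype.sum_equiv (finCongr hlen.symm) _ _ (fun i => rfl)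
    have hlist_ge : ∑ j, (nj j : ℝ≥0∞) * F x j ≤ (lpts.map (fun q => g (nndist x q))).sum := by
      rw [hlpts_def, List.map_append, List.sum_append]
      refine le_add_of_le_of_nonneg ?_ zero_le
      rw [hl0_def, List.map_flatten, List.map_ofFn, List.sum_flatten, List.map_ofFn,
        List.sum_ofFn]
      refine le_of_eq (Finset.sum_congr rfl fun j _ => ?_)
      simp only [Function.comp_def, List.map_replicate, List.sum_replicate, nsmul_eq_mul,
        hF_def]
    have hsumFk : ∑ j, F x j ≤ (k : ℝ≥0∞) * n := by
      calc ∑ j, F x j ≤ ∑ _j : Fin k, (n : ℝ≥0∞) :=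
            Finset.sum_le_sum fun j _ => hgbd _
        _ = (k : ℝ≥0∞) * n := by
            simp [Finset.sum_const, Finset.card_univ, nsmul_eq_mul]
    have h2 : ∑ j, F x j * m j ≤
        (N : ℝ≥0∞)⁻¹ * (∑ j, (nj j : ℝ≥0∞) * F x j) + (N : ℝ≥0∞)⁻¹ * ((k : ℝ≥0∞) * n) := by
      calc ∑ j, F x j * m j ≤ ∑ j, F x j * (((nj j : ℝ≥0∞) + 1) / N) :=
            Finset.sum_le_sum fun j _ => mul_le_mul_right (hnj_le j) _
        _ = (N : ℝ≥0∞)⁻¹ * ∑ j, F x j * ((nj j : ℝ≥0∞) + 1) := by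
            rw [Finset.mul_sum]
            refine Finset.sum_congr rfl fun j _ => ?_
            rw [ENNReal.div_eq_inv_mul]
            ring
        _ = (N : ℝ≥0∞)⁻¹ * ((∑ j, (nj j : ℝ≥0∞) * F x j) + ∑ j, F x j) := by
            congr 1
            rw [← Finset.sum_add_distrib]
            exact Finset.sum_congr rfl fun j _ => by ring
        _ ≤ (N : ℝ≥0∞)⁻¹ * (∑ j, (nj j : ℝ≥0∞) * F x j) + (N : ℝ≥0∞)⁻¹ * ((k : ℝ≥0∞) * n) := by
            rw [mul_add]
            gcongr
    have h3 : (N : ℝ≥0∞)⁻¹ * ((k : ℝ≥0∞) * n) ≤ e2 := by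
      have hkn : ((k : ℝ≥0∞) * n) ≤ e2 * N := by
        have h4 : ((k : ℝ≥0∞) * n) < N₁ * e2 := by
          rw [← ENNReal.div_lt_iff (Or.inl he20) (Or.inl he2top)]
          exact hN₁
        calc ((k : ℝ≥0∞) * n) ≤ (N₁ : ℝ≥0∞) * e2 := h4.le
          _ ≤ (N : ℝ≥0∞) * e2 := by
              gcongr
              exact_mod_cast le_trans (le_max_left _ _) hN
          _ = e2 * N := mul_comm _ _
      rw [mul_comm, ← div_eq_mul_inv]
      rw [ENNReal.div_le_iff_le_mul (Or.inl hNne) (Or.inl hNtop)]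
      exact hkn
    have hfinal : b ≤ (N : ℝ≥0∞)⁻¹ * (∑ i, g (nndist x (lpts.get (Fin.cast hlen.symm i)))) + e := by
      calc b ≤ (∑ j, F x j * m j) + e2 := hmain x hx
        _ ≤ ((N : ℝ≥0∞)⁻¹ * (∑ j, (nj j : ℝ≥0∞) * F x j)
              + (N : ℝ≥0∞)⁻¹ * ((k : ℝ≥0∞) * n)) + e2 := by gcongr
        _ ≤ ((N : ℝ≥0∞)⁻¹ * (∑ j, (nj j : ℝ≥0∞) * F x j) + e2) + e2 := by gcongr
        _ = (N : ℝ≥0∞)⁻¹ * (∑ j, (nj j : ℝ≥0∞) * F x j) + e := by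
            rw [add_assoc, he2_def, ENNReal.add_halves]
        _ ≤ (N : ℝ≥0∞)⁻¹ * (∑ i, g (nndist x (lpts.get (Fin.cast hlen.symm i)))) + e := by
            gcongr
            rw [hsum_eq]
            exact hlist_ge
    have hsub : b - e ≤ (N : ℝ≥0∞)⁻¹ * (∑ i, g (nndist x (lpts.get (Fin.cast hlen.symm i)))) :=
      tsub_le_iff_right.2 hfinal
    rwa [he_def, ENNReal.sub_sub_cancel hb hc'b.le] at hsub

lemma exists_good_n {X : Type*} [MetricSpace X] [MeasurableSpace X] [OpensMeasurableSpace X]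
    {A : Set X} (hA : IsCompact A) {f : ℝ≥0 → ℝ≥0∞} (hf : LowerSemicontinuous f)
    {μ : Measure X} (hμ : IsProbabilityMeasure μ)
    {b : ℝ≥0∞} (hb : ∀ x ∈ A, b < ∫⁻ y, f (nndist x y) ∂μ) :
    ∃ n : ℕ, ∀ x ∈ A, b < ∫⁻ y, gApprox f n (nndist x y) ∂μ := by
  classical
  set P : ℕ → X → ℝ≥0∞ := fun n x => ∫⁻ y, gApprox f n (nndist x y) ∂μ with hP_def
  have hmeas : ∀ n (x : X), Measurable fun y => gApprox f n (nndist x y) := fun n x =>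
    (gApprox_lsc f n).measurable.comp (continuous_const.nndist continuous_id).measurable
  have hPbd : ∀ n x, P n x ≤ (n : ℝ≥0∞) := by
    intro n x
    calc P n x ≤ ∫⁻ _, (n : ℝ≥0∞) ∂μ := lintegral_mono fun y => gApprox_le_n f n _
      _ = (n : ℝ≥0∞) := by simp [lintegral_const]
  have hPmono : ∀ x, Monotone (P · x) := fun x n m h =>
    lintegral_mono fun y => gApprox_mono f h _
  have hPsup : ∀ x, (⨆ n, P n x) = ∫⁻ y, f (nndist x y) ∂μ := by
    intro x
    rw [hP_def, ← lintegral_iSup (fun n => hmeas n x)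
      (fun n m h y => gApprox_mono f h _)]
    congr 1
    funext y
    exact gApprox_iSup f hf _
  have hPlip : ∀ n (x x' : X), P n x ≤ P n x' + n * (nndist x x' : ℝ≥0∞) := by
    intro n x x'
    calc P n x ≤ ∫⁻ y, (gApprox f n (nndist x' y) + n * (nndist x x' : ℝ≥0∞)) ∂μ := by
          refine lintegral_mono fun y => (gApprox_lip f n (nndist x y) (nndist x' y)).trans ?_
          gcongr
          rw [nndist_comm x y, nndist_comm x' y]
          exact nndist_nndist_le y x x'
      _ = P n x' + n * (nndist x x' : ℝ≥0∞) := by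
          rw [lintegral_add_right _ measurable_const, lintegral_const, measure_univ, mul_one]
  have key : ∀ x ∈ A, ∃ (n : ℕ) (ρ : ℝ), 0 < ρ ∧ ∀ x' ∈ Metric.ball x ρ, b < P n x' := by
    intro x hx
    have hbx : b < ⨆ n, P n x := by rw [hPsup]; exact hb x hx
    obtain ⟨n, hn⟩ := lt_iSup_iff.1 hbx
    obtain ⟨b', hbb', hb'P⟩ := exists_between hn
    have hb'top : b' ≠ ⊤ := (hb'P.trans_le (hPbd n x)).ne_top
    have hd0 : b' - b ≠ 0 := (tsub_pos_of_lt hbb').ne'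
    refine ⟨n, (b' - b).toReal / (n + 1), div_pos (ENNReal.toReal_pos hd0 (by finiteness)) (by positivity), fun x' hx' => ?_⟩
    by_contra hle
    push_neg at hle
    have hedist : (n : ℝ≥0∞) * (nndist x x' : ℝ≥0∞) ≤ b' - b := by
      have h1 : (nndist x x' : ℝ≥0∞) ≤ ENNReal.ofReal ((b' - b).toReal / (n + 1)) := by
        rw [← edist_nndist, edist_dist]
        exact ENNReal.ofReal_le_ofReal (by rw [dist_comm]; exact hx'.le)
      calc (n : ℝ≥0∞) * (nndist x x' : ℝ≥0∞)
          ≤ (n : ℝ≥0∞) * ENNReal.ofReal ((b' - b).toReal / (n + 1)) := by gcongr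
        _ = ENNReal.ofReal ((n : ℝ) * ((b' - b).toReal / (n + 1))) := by
            rw [ENNReal.ofReal_mul (by positivity), ENNReal.ofReal_natCast]
        _ ≤ ENNReal.ofReal ((b' - b).toReal) := by
            refine ENNReal.ofReal_le_ofReal ?_
            rw [mul_div_assoc']
            refine div_le_of_le_mul₀ (by positivity) ENNReal.toReal_nonneg ?_
            nlinarith [ENNReal.toReal_nonneg (a := b' - b)]
        _ = b' - b := ENNReal.ofReal_toReal (by finiteness)
    have : P n x ≤ b' := by
      calc P n x ≤ P n x' + n * (nndist x x' : ℝ≥0∞) := hPlip n x x'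
        _ ≤ b + (b' - b) := add_le_add hle hedist
        _ = b' := add_tsub_cancel_of_le hbb'.le
    exact hb'P.not_ge this
  choose! n ρ hρpos hρ using key
  obtain ⟨t₀, ht₀⟩ := hA.elim_finite_subcover
    (fun z : A => Metric.ball (z : X) (ρ (z : X)))
    (fun z => Metric.isOpen_ball)
    (fun x hx => Set.mem_iUnion.2 ⟨⟨x, hx⟩, Metric.mem_ball_self (hρpos x hx)⟩)
  refine ⟨t₀.sup (fun z : A => n (z : X)), fun x hx => ?_⟩
  obtain ⟨z, hz, hxz⟩ := Set.mem_iUnion₂.1 (ht₀ hx)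
  calc b < P (n (z : X)) x := hρ (z : X) z.2 x hxz
    _ ≤ P (t₀.sup fun z : A => n (z : X)) x := hPmono x (Finset.le_sup (f := fun z : A => n (z : X)) hz)

theorem maxPolarization_tendsto
    {t : ℕ} (A : Set (EuclideanSpace ℝ (Fin t))) (hA : IsCompact A)
    (f : ℝ≥0 → ℝ≥0∞) (hf : LowerSemicontinuous f)
    (μeq : Measure (EuclideanSpace ℝ (Fin t))) (hμeq : IsProbabilityMeasure μeq)
    (hμeqA : μeq Aᶜ = 0)
    (hA1 : ∃ μ : Measure (EuclideanSpace ℝ (Fin t)),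
      IsProbabilityMeasure μ ∧ μ Aᶜ = 0 ∧ energy f μ < ⊤)
    (hA2min : ∀ ν : Measure (EuclideanSpace ℝ (Fin t)),
      IsProbabilityMeasure ν → ν Aᶜ = 0 → energy f μeq ≤ energy f ν)
    (hA2uniq : ∀ ν : Measure (EuclideanSpace ℝ (Fin t)),
      IsProbabilityMeasure ν → ν Aᶜ = 0 → energy f ν = energy f μeq → ν = μeq)
    (hA3 : ∀ x ∈ A, ∀ U : Set (EuclideanSpace ℝ (Fin t)), IsOpen U → x ∈ U → 0 < μeq U)
    (W : ℝ≥0∞) (hW : 0 < W) (hA4 : ∀ x ∈ A, potential f μeq x = W) :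
    Tendsto (fun N => maxPolarization f A N) atTop (𝓝 W) := by
  have hWtop : W ≠ ⊤ := by
    obtain ⟨μ₀, hμ₀p, hμ₀A, hμ₀E⟩ := hA1
    exact W_ne_top hμeq hμeqA hA4 ((hA2min μ₀ hμ₀p hμ₀A).trans_lt hμ₀E)
  have hAne : A.Nonempty := by
    rw [Set.nonempty_iff_ne_empty]
    rintro rfl
    rw [Set.compl_empty, measure_univ] at hμeqA
    exact one_ne_zero hμeqA
  refine tendsto_order.2 ⟨fun c hc => ?_, fun c hc => ?_⟩
  · obtain ⟨c', hcc', hc'W⟩ := exists_between hc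
    obtain ⟨b, hc'b, hbW⟩ := exists_between hc'W
    have hbtop : b ≠ ⊤ := (hbW.trans_le le_top).ne_top
    have hb : ∀ x ∈ A, b < ∫⁻ y, f (nndist x y) ∂μeq := fun x hx => by
      rw [show (∫⁻ y, f (nndist x y) ∂μeq) = potential f μeq x from rfl, hA4 x hx]
      exact hbW
    obtain ⟨n, hn⟩ := exists_good_n hA hf hμeq hb
    obtain ⟨N₀, hN₀⟩ := exists_config hA hAne hμeq hμeqA (gApprox f n) n
      (gApprox_lip f n) (gApprox_le_n f n) (gApprox_lsc f n).measurable hbtop hc'b hn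
    filter_upwards [eventually_ge_atTop N₀] with N hN
    obtain ⟨ω, hωA, hω⟩ := hN₀ N hN
    have hpol : c' ≤ polarization f A ω := by
      refine le_iInf fun x => le_iInf fun hx => ?_
      refine (hω x hx).trans ?_
      unfold discretePotential
      gcongr with i
      exact gApprox_le_f f n _
    calc c < c' := hcc'
      _ ≤ polarization f A ω := hpol
      _ ≤ maxPolarization f A N :=
          le_iSup₂ (f := fun (ω : Fin N → EuclideanSpace ℝ (Fin t))
            (_ : ∀ i, ω i ∈ A) => polarization f A ω) ω hωA
  · filter_upwards [eventually_ge_atTop 1] with N hN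
    exact (maxPolarization_le_W hf hμeq hμeqA hA4 (by omega)).trans_lt hc

end
end

section
/- Let the compact set A and lower semicontinuous kernel K satisfy assumptions (A1)-(A4). Then μ_eq is the unique polarization extremal measure: sup over all probability measures μ on A of min_{x∈A} U^μ(x) equals W_K, and any probability measure μ_p on A with min_{x∈A} U^{μ_p}(x) = W_K must equal μ_eq. -/
open MeasureTheory Filter Topology BoundedContinuousFunction NNReal ENNReal

noncomputable section

lemma pot_kernel_meas {t : ℕ} {f : ℝ≥0 → ℝ≥0∞} (hf : LowerSemicontinuous f) :
    Measurable (fun p : EuclideanSpace ℝ (Fin t) × EuclideanSpace ℝ (Fin t) =>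
      f (nndist p.1 p.2)) :=
  hf.measurable.comp continuous_nndist.measurable

lemma pot_lsc {t : ℕ} {f : ℝ≥0 → ℝ≥0∞} (hf : LowerSemicontinuous f)
    (μ : Measure (EuclideanSpace ℝ (Fin t))) :
    LowerSemicontinuous (potential f μ) := by
  intro x c hc
  by_contra h
  rw [Filter.not_eventually] at h
  obtain ⟨u, hu, hple⟩ := exists_seq_forall_of_frequently h
  push_neg at hple
  have key : potential f μ x ≤ liminf (fun n => potential f μ (u n)) atTop := by
    calc potential f μ x ≤ ∫⁻ y, liminf (fun n => f (nndist (u n) y)) atTop ∂μ := by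
          apply lintegral_mono
          intro y
          have h1 : Tendsto (fun n => nndist (u n) y) atTop (𝓝 (nndist x y)) :=
            ((continuous_id.nndist continuous_const).tendsto x).comp hu
          calc f (nndist x y) ≤ liminf f (𝓝 (nndist x y)) :=
                (hf.lowerSemicontinuousAt (nndist x y)).le_liminf
            _ ≤ liminf f (Filter.map (fun n => nndist (u n) y) atTop) :=
                liminf_le_liminf_of_le h1
            _ = liminf (fun n => f (nndist (u n) y)) atTop :=
                (Filter.liminf_comp f (fun n => nndist (u n) y) atTop).symm
      _ ≤ liminf (fun n => potential f μ (u n)) atTop := by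
          exact lintegral_liminf_le fun n =>
            hf.measurable.comp (continuous_const.nndist continuous_id).measurable
  have : potential f μ x ≤ c := key.trans (liminf_le_of_frequently_le (Frequently.of_forall hple))
  exact absurd hc this.not_gt

lemma pot_swap {t : ℕ} {f : ℝ≥0 → ℝ≥0∞} (hf : LowerSemicontinuous f)
    (μ ν : Measure (EuclideanSpace ℝ (Fin t))) [SFinite μ] [SFinite ν] :
    ∫⁻ x, potential f ν x ∂μ = ∫⁻ y, potential f μ y ∂ν := by
  have := lintegral_lintegral_swap (μ := μ) (ν := ν)
    (f := fun x y => f (nndist x y)) (pot_kernel_meas hf).aemeasurable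
  simp only [potential]
  rw [this]
  refine lintegral_congr fun y => lintegral_congr fun x => by rw [nndist_comm]

theorem unique_polarization_extremal_measure
    {t : ℕ} (A : Set (EuclideanSpace ℝ (Fin t))) (hA : IsCompact A)
    (f : ℝ≥0 → ℝ≥0∞) (hf : LowerSemicontinuous f)
    (μeq : Measure (EuclideanSpace ℝ (Fin t))) (hμeq : IsProbabilityMeasure μeq)
    (hμeqA : μeq Aᶜ = 0)
    (hA1 : ∃ μ : Measure (EuclideanSpace ℝ (Fin t)),
      IsProbabilityMeasure μ ∧ μ Aᶜ = 0 ∧ energy f μ < ⊤)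
    (hA2min : ∀ ν : Measure (EuclideanSpace ℝ (Fin t)),
      IsProbabilityMeasure ν → ν Aᶜ = 0 → energy f μeq ≤ energy f ν)
    (hA2uniq : ∀ ν : Measure (EuclideanSpace ℝ (Fin t)),
      IsProbabilityMeasure ν → ν Aᶜ = 0 → energy f ν = energy f μeq → ν = μeq)
    (hA3 : ∀ x ∈ A, ∀ U : Set (EuclideanSpace ℝ (Fin t)), IsOpen U → x ∈ U → 0 < μeq U)
    (W : ℝ≥0∞) (hW : 0 < W) (hA4 : ∀ x ∈ A, potential f μeq x = W) :
    (⨆ (μ : Measure (EuclideanSpace ℝ (Fin t))) (_ : IsProbabilityMeasure μ) (_ : μ Aᶜ = 0),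
      ⨅ x ∈ A, potential f μ x) = W ∧
    ∀ μp : Measure (EuclideanSpace ℝ (Fin t)), IsProbabilityMeasure μp → μp Aᶜ = 0 →
      (⨅ x ∈ A, potential f μp x) = W → μp = μeq := by
  have hAne : A.Nonempty := by
    by_contra hne
    rw [Set.not_nonempty_iff_eq_empty] at hne
    rw [hne, Set.compl_empty] at hμeqA
    exact (one_ne_zero) (hμeqA ▸ hμeq.measure_univ.symm)
  have hmemeq : ∀ᵐ x ∂μeq, x ∈ A := by
    rw [ae_iff]
    exact hμeqA
  -- (*) : for any probability measure supported in A, ∫ U^μ dμeq = W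
  have key : ∀ μ : Measure (EuclideanSpace ℝ (Fin t)), IsProbabilityMeasure μ → μ Aᶜ = 0 →
      ∫⁻ x, potential f μ x ∂μeq = W := by
    intro μ hμ hμA
    haveI := hμ
    rw [pot_swap hf]
    have hae : ∀ᵐ y ∂μ, potential f μeq y = W := by
      rw [ae_iff]
      refine measure_mono_null (fun y hy => ?_) hμA
      exact fun hyA => hy (hA4 y hyA)
    rw [lintegral_congr_ae hae, lintegral_const, measure_univ, mul_one]
  have hEeq : energy f μeq = W := key μeq hμeq hμeqA
  have hWtop : W ≠ ⊤ := by
    obtain ⟨ν, hν, hνA, hνE⟩ := hA1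
    have := (hA2min ν hν hνA).trans_lt hνE
    rw [hEeq] at this
    exact this.ne
  constructor
  · apply le_antisymm
    · refine iSup_le fun μ => iSup_le fun hμ => iSup_le fun hμA => ?_
      haveI := hμ
      calc (⨅ x ∈ A, potential f μ x)
          = ∫⁻ _, (⨅ x ∈ A, potential f μ x) ∂μeq := by
            rw [lintegral_const, measure_univ, mul_one]
        _ ≤ ∫⁻ x, potential f μ x ∂μeq := by
            refine lintegral_mono_ae ?_
            filter_upwards [hmemeq] with x hxA
            exact biInf_le _ hxA
        _ = W := key μ hμ hμA
    · have h1 : (⨅ x ∈ A, potential f μeq x) = W := by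
        rw [iInf_congr fun x => iInf_congr fun hx => hA4 x hx]
        exact biInf_const hAne
      exact h1 ▸ le_iSup_of_le μeq (le_iSup_of_le hμeq (le_iSup_of_le hμeqA le_rfl))
  · intro μp hμp hμpA hinf
    haveI := hμp
    have hge : ∀ x ∈ A, W ≤ potential f μp x := fun x hx => hinf ▸ biInf_le _ hx
    have hint : ∫⁻ x, potential f μp x ∂μeq = W := key μp hμp hμpA
    have heq : ∀ x ∈ A, potential f μp x = W := by
      intro x0 hx0
      by_contra hne
      have hgt : W < potential f μp x0 := (hge x0 hx0).lt_of_ne (Ne.symm hne)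
      obtain ⟨c, hc1, hc2⟩ := exists_between hgt
      have hlsc : ∀ᶠ y in 𝓝 x0, c < potential f μp y := pot_lsc hf μp x0 c hc2
      obtain ⟨U, hUsub, hUopen, hxU⟩ := eventually_nhds_iff.mp hlsc
      have hμU : 0 < μeq U := hA3 x0 hx0 U hUopen hxU
      have hlb : ∫⁻ x, (W + U.indicator (fun _ => c - W) x) ∂μeq
          ≤ ∫⁻ x, potential f μp x ∂μeq := by
        refine lintegral_mono_ae ?_
        filter_upwards [hmemeq] with x hxA
        by_cases hxU' : x ∈ U
        · rw [Set.indicator_of_mem hxU', add_tsub_cancel_of_le hc1.le]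
          exact (hUsub x hxU').le
        · rw [Set.indicator_of_notMem hxU', add_zero]
          exact hge x hxA
      have hcomp : ∫⁻ x, (W + U.indicator (fun _ => c - W) x) ∂μeq
          = W + (c - W) * μeq U := by
        rw [lintegral_add_left measurable_const, lintegral_const, measure_univ, mul_one,
          lintegral_indicator hUopen.measurableSet, setLIntegral_const]
      have habs : W < W := by
        calc W < W + (c - W) * μeq U :=
              ENNReal.lt_add_right hWtop (mul_ne_zero (tsub_pos_of_lt hc1).ne' hμU.ne')
          _ = ∫⁻ x, (W + U.indicator (fun _ => c - W) x) ∂μeq := hcomp.symm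
          _ ≤ ∫⁻ x, potential f μp x ∂μeq := hlb
          _ = W := hint
      exact absurd habs (lt_irrefl W)
    have hEp : energy f μp = W := by
      have hmemp : ∀ᵐ x ∂μp, x ∈ A := by rw [ae_iff]; exact hμpA
      have : ∀ᵐ x ∂μp, potential f μp x = W := by
        filter_upwards [hmemp] with x hx using heq x hx
      rw [energy, lintegral_congr_ae this, lintegral_const, measure_univ, mul_one]
    exact hA2uniq μp hμp hμpA (by rw [hEp, hEeq])
end
end
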